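/- arXiv:1401.5543 — 8 statements merged into one kernel-verified Lean document; each statement's English description precedes it below -/
import Mathlib

section
/- (KAT bound) Let (Ω, P) be a probability space and let A_1, …, A_N be measurable events (N ≥ 1) with P(A_i) > 0 for every i. Then P(⋃_{i=1}^N A_i) ≥ Σ_{i=1}^N [ 1/⌊γ_i/α_i⌋ − (γ_i/α_i − ⌊γ_i/α_i⌋) / ((1 + ⌊γ_i/α_i⌋)·⌊γ_i/α_i⌋) ] · α_i. -/
open MeasureTheory

lemma kat_chord (a b : ℝ) (ha : 1 ≤ a) (hb : 1 ≤ b) (hgap : 0 ≤ (a - b) * (a - (b+1))) :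
    (1/b + 1/(b+1)) - a/(b*(b+1)) ≤ 1/a := by
  have ha0 : 0 < a := by linarith
  have hb0 : 0 < b := by linarith
  have hb1 : 0 < b + 1 := by linarith
  have key : 1/a - ((1/b + 1/(b+1)) - a/(b*(b+1))) = (a-b)*(a-(b+1))/(a*b*(b+1)) := by
    field_simp; ring
  nlinarith [div_nonneg hgap (by positivity : (0:ℝ) ≤ a*b*(b+1))]

/-- The KAT bound: with `α i = P(A i) > 0` and `γ i = ∑ j, P(A i ∩ A j)` (including `j = i`),
`P(⋃ i, A i) ≥ ∑ i [1/⌊γ i/α i⌋ − (γ i/α i − ⌊γ i/α i⌋)/((1+⌊γ i/α i⌋)⌊γ i/α i⌋)] α i`. -/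
theorem kat_bound {Ω : Type*} [MeasurableSpace Ω] (P : Measure Ω)
    [IsProbabilityMeasure P] (N : ℕ) (hN : 1 ≤ N)
    (A : Fin N → Set Ω) (hA : ∀ i, MeasurableSet (A i))
    (hpos : ∀ i, 0 < P (A i))
    (α γ : Fin N → ℝ)
    (hα : ∀ i, α i = (P (A i)).toReal)
    (hγ : ∀ i, γ i = ∑ j : Fin N, (P (A i ∩ A j)).toReal) :
    (P (⋃ i, A i)).toReal ≥
      ∑ i : Fin N, (1 / (⌊γ i / α i⌋ : ℝ) -
        (γ i / α i - (⌊γ i / α i⌋ : ℝ)) /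
          ((1 + (⌊γ i / α i⌋ : ℝ)) * (⌊γ i / α i⌋ : ℝ))) * α i := by
  classical
  -- atoms
  set B : Finset (Fin N) → Set Ω := fun s => ⋂ i, (if i ∈ s then A i else (A i)ᶜ) with hB
  have hmem : ∀ (ω : Ω) (s : Finset (Fin N)), ω ∈ B s ↔ ∀ i, (ω ∈ A i ↔ i ∈ s) := by
    intro ω s
    simp only [hB, Set.mem_iInter]
    refine forall_congr' fun i => ?_
    by_cases h : i ∈ s <;> simp [h]
  have hBmeas : ∀ s, MeasurableSet (B s) := by
    intro s
    refine MeasurableSet.iInter fun i => ?_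
    by_cases h : i ∈ s <;> simp [h, hA i, (hA i).compl]
  have hBdisj : ∀ s t : Finset (Fin N), s ≠ t → Disjoint (B s) (B t) := by
    intro s t hst
    rw [Set.disjoint_left]
    intro ω hs ht
    apply hst
    ext i
    rw [← (hmem ω s).1 hs i, (hmem ω t).1 ht i]
  have hsig : ∀ ω : Ω, ω ∈ B (Finset.univ.filter (fun i => ω ∈ A i)) := by
    intro ω
    rw [hmem]
    intro i
    simp
  set p : Finset (Fin N) → ℝ := fun s => (P (B s)).toReal with hpdef
  have hp0 : ∀ s, 0 ≤ p s := fun s => ENNReal.toReal_nonneg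
  have hPT : ∀ T : Finset (Finset (Fin N)),
      (P (⋃ s ∈ T, B s)).toReal = ∑ s ∈ T, p s := by
    intro T
    rw [measure_biUnion_finset (fun s _ t _ hst => hBdisj s t hst) (fun s _ => hBmeas s)]
    exact ENNReal.toReal_sum (fun s _ => measure_ne_top P _)
  -- expressing events as unions of atoms
  have hAi : ∀ i, A i = ⋃ s ∈ Finset.univ.filter (fun s => i ∈ s), B s := by
    intro i
    ext ω
    simp only [Set.mem_iUnion, Finset.mem_filter, Finset.mem_univ, true_and]
    constructor
    · intro h
      exact ⟨Finset.univ.filter (fun j => ω ∈ A j), by simp [h], hsig ω⟩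
    · rintro ⟨s, his, hωs⟩
      exact ((hmem ω s).1 hωs i).2 his
  have hAij : ∀ i j, A i ∩ A j = ⋃ s ∈ Finset.univ.filter (fun s => i ∈ s ∧ j ∈ s), B s := by
    intro i j
    ext ω
    simp only [Set.mem_inter_iff, Set.mem_iUnion, Finset.mem_filter, Finset.mem_univ, true_and]
    constructor
    · rintro ⟨hi, hj⟩
      exact ⟨Finset.univ.filter (fun l => ω ∈ A l), by simp [hi, hj], hsig ω⟩
    · rintro ⟨s, ⟨his, hjs⟩, hωs⟩
      exact ⟨((hmem ω s).1 hωs i).2 his, ((hmem ω s).1 hωs j).2 hjs⟩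
  have hUeq : (⋃ i, A i) = ⋃ s ∈ Finset.univ.filter (fun s => s.Nonempty), B s := by
    ext ω
    simp only [Set.mem_iUnion, Finset.mem_filter, Finset.mem_univ, true_and]
    constructor
    · rintro ⟨i, hi⟩
      exact ⟨Finset.univ.filter (fun j => ω ∈ A j), ⟨i, by simp [hi]⟩, hsig ω⟩
    · rintro ⟨s, ⟨i, his⟩, hωs⟩
      exact ⟨i, ((hmem ω s).1 hωs i).2 his⟩
  have hα' : ∀ i, α i = ∑ s ∈ Finset.univ.filter (fun s => i ∈ s), p s := by
    intro i; rw [hα, hAi i, hPT]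
  have hα_pos : ∀ i, 0 < α i := by
    intro i
    rw [hα]
    exact ENNReal.toReal_pos (hpos i).ne' (measure_ne_top P _)
  have hγ' : ∀ i, γ i = ∑ s ∈ Finset.univ.filter (fun s => i ∈ s), (s.card : ℝ) * p s := by
    intro i
    rw [hγ]
    calc ∑ j : Fin N, (P (A i ∩ A j)).toReal
        = ∑ j : Fin N, ∑ s : Finset (Fin N), if i ∈ s ∧ j ∈ s then p s else 0 := by
          refine Finset.sum_congr rfl fun j _ => ?_
          rw [hAij i j, hPT, Finset.sum_filter]
      _ = ∑ s : Finset (Fin N), ∑ j : Fin N, if i ∈ s ∧ j ∈ s then p s else 0 :=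
          Finset.sum_comm
      _ = ∑ s : Finset (Fin N), if i ∈ s then (s.card : ℝ) * p s else 0 := by
          refine Finset.sum_congr rfl fun s _ => ?_
          by_cases h : i ∈ s
          · simp only [h, true_and, if_true]
            rw [Finset.sum_ite_mem, Finset.univ_inter, Finset.sum_const, nsmul_eq_mul]
          · simp [h]
      _ = ∑ s ∈ Finset.univ.filter (fun s => i ∈ s), (s.card : ℝ) * p s :=
          (Finset.sum_filter _ _).symm
  have hU' : (P (⋃ i, A i)).toReal = ∑ s ∈ Finset.univ.filter (fun s => s.Nonempty), p s := by
    rw [hUeq, hPT]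
  -- floor facts
  have hγα : ∀ i, α i ≤ γ i := by
    intro i
    rw [hγ]
    have : α i = (P (A i ∩ A i)).toReal := by rw [Set.inter_self, hα]
    rw [this]
    exact Finset.single_le_sum (f := fun j => (P (A i ∩ A j)).toReal)
      (fun j _ => ENNReal.toReal_nonneg) (Finset.mem_univ i)
  set κ : Fin N → ℝ := fun i => ((⌊γ i / α i⌋ : ℤ) : ℝ) with hκ
  have hr1 : ∀ i, (1:ℝ) ≤ κ i := by
    intro i
    have h1 : (1:ℝ) ≤ γ i / α i := (one_le_div (hα_pos i)).2 (hγα i)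
    have h2 : (1:ℤ) ≤ ⌊γ i / α i⌋ := Int.le_floor.2 (by exact_mod_cast h1)
    simp only [hκ]
    exact_mod_cast h2
  have hterm : ∀ i, (1 / κ i - (γ i / α i - κ i) / ((1 + κ i) * κ i)) * α i
      = (1/(κ i) + 1/(κ i + 1)) * α i - γ i / (κ i * (κ i + 1)) := by
    intro i
    have hr : (0:ℝ) < κ i := lt_of_lt_of_le one_pos (hr1 i)
    have hr' : (0:ℝ) < 1 + κ i := by linarith
    have hα0 : α i ≠ 0 := (hα_pos i).ne'
    field_simp
    ring
  have hgap : ∀ (i : Fin N) (s : Finset (Fin N)), i ∈ s →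
      0 ≤ ((s.card : ℝ) - κ i) * ((s.card : ℝ) - (κ i + 1)) := by
    intro i s his
    simp only [hκ]
    rcases le_or_gt (s.card : ℤ) ⌊γ i / α i⌋ with h | h
    · have h1 : (s.card : ℝ) ≤ ((⌊γ i / α i⌋ : ℤ) : ℝ) := by exact_mod_cast h
      nlinarith
    · have h1 : ((⌊γ i / α i⌋ : ℤ) : ℝ) + 1 ≤ (s.card : ℝ) := by exact_mod_cast h
      nlinarith
  rw [ge_iff_le]
  calc ∑ i : Fin N, (1 / κ i - (γ i / α i - κ i) / ((1 + κ i) * κ i)) * α i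
      = ∑ i : Fin N, ((1/(κ i) + 1/(κ i + 1)) * α i - γ i / (κ i * (κ i + 1))) :=
        Finset.sum_congr rfl fun i _ => hterm i
    _ = ∑ i : Fin N, ∑ s ∈ Finset.univ.filter (fun s => i ∈ s),
          ((1/(κ i) + 1/(κ i + 1)) - (s.card : ℝ) / (κ i * (κ i + 1))) * p s := by
        refine Finset.sum_congr rfl fun i _ => ?_
        rw [hα' i, hγ' i, Finset.mul_sum, Finset.sum_div, ← Finset.sum_sub_distrib]
        refine Finset.sum_congr rfl fun s _ => ?_
        ring
    _ ≤ ∑ i : Fin N, ∑ s ∈ Finset.univ.filter (fun s => i ∈ s), (1/(s.card : ℝ)) * p s := by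
        refine Finset.sum_le_sum fun i _ => Finset.sum_le_sum fun s hs => ?_
        rw [Finset.mem_filter] at hs
        have hcard : 1 ≤ s.card := Finset.card_pos.2 ⟨i, hs.2⟩
        have hcardR : (1:ℝ) ≤ (s.card : ℝ) := by exact_mod_cast hcard
        exact mul_le_mul_of_nonneg_right
          (kat_chord _ _ hcardR (hr1 i) (hgap i s hs.2)) (hp0 s)
    _ = ∑ s : Finset (Fin N), ∑ i : Fin N, if i ∈ s then (1/(s.card : ℝ)) * p s else 0 := by
        rw [Finset.sum_comm]
        exact Finset.sum_congr rfl fun i _ => Finset.sum_filter _ _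
    _ = ∑ s ∈ Finset.univ.filter (fun s => s.Nonempty), p s := by
        rw [Finset.sum_filter]
        refine Finset.sum_congr rfl fun s _ => ?_
        rw [Finset.sum_ite_mem, Finset.univ_inter, Finset.sum_const, nsmul_eq_mul]
        by_cases h : s.Nonempty
        · have hc : (s.card : ℝ) ≠ 0 := by
            have := Finset.card_pos.2 h
            exact_mod_cast this.ne'
          simp only [h, if_true]
          field_simp
        · simp [Finset.not_nonempty_iff_eq_empty.1 h]
    _ = (P (⋃ i, A i)).toReal := hU'.symm
end

section
/- (New analytical bound) Let (Ω, P) be a probability space and let A_1, …, A_N be measurable events (N ≥ 2) with P(A_i) > 0 for every i. Let δ = max(0, max_{1≤i≤N} (γ_i − (N−1)α_i)), and assume δ < α_i for every i. Set α_i' = α_i − δ and γ_i' = γ_i − N·δ. Then P(⋃_{i=1}^N A_i) ≥ δ + Σ_{i=1}^N [ 1/χ(γ_i'/α_i') − (γ_i'/α_i' − χ(γ_i'/α_i')) / ((1 + χ(γ_i'/α_i'))·χ(γ_i'/α_i')) ] · α_i'. -/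
open MeasureTheory

open Classical in
/-- `χ(x) = x − 1` if `x` is an integer with `x ≥ 2`, and `χ(x) = ⌊x⌋` otherwise. -/
noncomputable def chi (x : ℝ) : ℝ :=
  if (∃ n : ℤ, x = (n : ℝ)) ∧ 2 ≤ x then x - 1 else (⌊x⌋ : ℝ)

lemma chi_int {x : ℝ} (hx : 1 ≤ x) : ∃ M : ℤ, chi x = (M : ℝ) ∧ 1 ≤ M := by
  unfold chi
  split_ifs with h
  · obtain ⟨⟨n, hn⟩, h2⟩ := h
    refine ⟨n - 1, by rw [hn]; push_cast; ring, ?_⟩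
    have h2' : (2:ℝ) ≤ (n:ℝ) := hn ▸ h2
    have : (2:ℤ) ≤ n := by exact_mod_cast h2'
    omega
  · exact ⟨⌊x⌋, rfl, Int.le_floor.mpr (by simpa using hx)⟩

lemma chord {M : ℤ} (hM : 1 ≤ M) {k : ℕ} (hk : 1 ≤ k) :
    1 / (M:ℝ) - ((k:ℝ) - M) / ((1 + M) * M) ≤ 1 / (k:ℝ) := by
  have hM0 : (0:ℝ) < M := by exact_mod_cast hM
  have hk0 : (0:ℝ) < k := by exact_mod_cast hk
  have hM1 : (0:ℝ) < 1 + M := by linarith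
  have key : (0:ℝ) ≤ ((k:ℝ) - M) * ((k:ℝ) - M - 1) := by
    have h0 : (0:ℤ) ≤ ((k:ℤ) - M) * ((k:ℤ) - M - 1) := by
      rcases le_or_gt ((k:ℤ) - M) 0 with h | h
      · have := mul_nonneg (neg_nonneg.mpr h) (neg_nonneg.mpr (by omega : (k:ℤ) - M - 1 ≤ 0))
        nlinarith
      · exact mul_nonneg (by omega) (by omega)
    exact_mod_cast h0
  rw [div_sub_div _ _ hM0.ne' (by positivity), div_le_div_iff₀ (by positivity) hk0]
  nlinarith [key, hM0, hk0, hM1]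

lemma core {ι : Type*} (F : Finset ι) (w : ι → ℝ) (c : ι → ℕ)
    (hw : ∀ s ∈ F, 0 ≤ w s) (hc : ∀ s ∈ F, 1 ≤ c s)
    {a g : ℝ} (ha : 0 < a)
    (hAs : ∑ s ∈ F, w s = a) (hGs : ∑ s ∈ F, (c s : ℝ) * w s = g) :
    (1 / chi (g / a) - (g / a - chi (g / a)) / ((1 + chi (g / a)) * chi (g / a))) * a
      ≤ ∑ s ∈ F, w s / (c s : ℝ) := by
  have hga : a ≤ g := by
    rw [← hAs, ← hGs]
    apply Finset.sum_le_sum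
    intro s hs
    have h1 : (1:ℝ) ≤ c s := by exact_mod_cast hc s hs
    nlinarith [hw s hs]
  have hx : 1 ≤ g / a := (one_le_div ha).mpr hga
  obtain ⟨M, hMx, hM1⟩ := chi_int hx
  rw [hMx]
  have hM0 : (0:ℝ) < M := by exact_mod_cast hM1
  have hM1' : (0:ℝ) < 1 + M := by linarith
  have step : ∀ s ∈ F, w s * (1/(M:ℝ) - ((c s:ℝ) - M)/((1+M)*M)) ≤ w s / (c s : ℝ) := by
    intro s hs
    have hck : (0:ℝ) < c s := by exact_mod_cast hc s hs
    have := mul_le_mul_of_nonneg_left (chord hM1 (hc s hs)) (hw s hs)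
    calc w s * (1/(M:ℝ) - ((c s:ℝ) - M)/((1+M)*M)) ≤ w s * (1 / (c s:ℝ)) := this
      _ = w s / (c s:ℝ) := by rw [mul_one_div]
  have expand : ∑ s ∈ F, w s * (1/(M:ℝ) - ((c s:ℝ) - M)/((1+M)*M))
      = a * (1/(M:ℝ)) - (g - M * a) / ((1+M)*M) := by
    rw [← hAs, ← hGs]
    rw [Finset.sum_mul, Finset.mul_sum, ← Finset.sum_sub_distrib, Finset.sum_div,
      ← Finset.sum_sub_distrib]
    apply Finset.sum_congr rfl
    intro s _
    field_simp
  calc (1 / (M:ℝ) - (g / a - M) / ((1 + M) * M)) * a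
      = a * (1/(M:ℝ)) - (g - M * a) / ((1+M)*M) := by
        field_simp
    _ = ∑ s ∈ F, w s * (1/(M:ℝ) - ((c s:ℝ) - M)/((1+M)*M)) := expand.symm
    _ ≤ ∑ s ∈ F, w s / (c s : ℝ) := Finset.sum_le_sum step

/-- The new analytical (YAT) lower bound on the probability of a union. -/
theorem yat_bound {Ω : Type*} [MeasurableSpace Ω] (P : Measure Ω)
    [IsProbabilityMeasure P] (N : ℕ) (hN : 2 ≤ N)
    (A : Fin N → Set Ω) (hA : ∀ i, MeasurableSet (A i))
    (hpos : ∀ i, 0 < P (A i))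
    (α γ : Fin N → ℝ)
    (hα : ∀ i, α i = (P (A i)).toReal)
    (hγ : ∀ i, γ i = ∑ j : Fin N, (P (A i ∩ A j)).toReal)
    (δ : ℝ)
    (hδ : δ = max 0 (Finset.univ.sup' (Finset.univ_nonempty_iff.mpr ⟨⟨0, by omega⟩⟩)
        (fun i => γ i - ((N : ℝ) - 1) * α i)))
    (hδα : ∀ i, δ < α i)
    (α' γ' : Fin N → ℝ)
    (hα' : ∀ i, α' i = α i - δ) (hγ' : ∀ i, γ' i = γ i - (N : ℝ) * δ) :
    (P (⋃ i, A i)).toReal ≥ δ +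
      ∑ i : Fin N, (1 / chi (γ' i / α' i) -
        (γ' i / α' i - chi (γ' i / α' i)) /
          ((1 + chi (γ' i / α' i)) * chi (γ' i / α' i))) * α' i := by
  classical
  set atom : Finset (Fin N) → Set Ω := fun s => {ω | ∀ i, ω ∈ A i ↔ i ∈ s} with hatom
  have hmeas : ∀ s, MeasurableSet (atom s) := by
    intro s
    have h : atom s = ⋂ i, (if i ∈ s then A i else (A i)ᶜ) := by
      ext ω
      simp only [hatom, Set.mem_setOf_eq, Set.mem_iInter]
      refine forall_congr' fun i => ?_
      by_cases h : i ∈ s <;> simp [h]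
    rw [h]
    exact MeasurableSet.iInter fun i => by split_ifs; exacts [hA i, (hA i).compl]
  have hdisj : Pairwise (Function.onFun Disjoint atom) := by
    intro s t hst
    rw [Function.onFun, Set.disjoint_left]
    intro ω hs ht
    exact hst (Finset.ext fun i => (hs i).symm.trans (ht i))
  have hsplit : ∀ S : Set Ω, MeasurableSet S →
      (P S).toReal = ∑ s : Finset (Fin N), (P (S ∩ atom s)).toReal := by
    intro S hS
    have hcover : S = ⋃ s : Finset (Fin N), S ∩ atom s := by
      ext ω
      simp only [Set.mem_iUnion, Set.mem_inter_iff]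
      constructor
      · intro h
        exact ⟨Finset.univ.filter (fun i => ω ∈ A i), h, fun i => by simp⟩
      · rintro ⟨s, h, _⟩; exact h
    conv_lhs => rw [hcover]
    rw [measure_iUnion
        (fun s t hst => ((hdisj hst).mono Set.inter_subset_right Set.inter_subset_right))
        (fun s => hS.inter (hmeas s)),
      tsum_fintype, ENNReal.toReal_sum (fun s _ => measure_ne_top P _)]
  set q : Finset (Fin N) → ℝ := fun s => (P (atom s)).toReal with hq
  have hq0 : ∀ s, 0 ≤ q s := fun s => ENNReal.toReal_nonneg
  have hAint : ∀ (i : Fin N) (s), A i ∩ atom s = if i ∈ s then atom s else ∅ := by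
    intro i s
    split_ifs with h
    · ext ω
      simp only [Set.mem_inter_iff, hatom, Set.mem_setOf_eq]
      exact ⟨fun hh => hh.2, fun h2 => ⟨(h2 i).mpr h, h2⟩⟩
    · rw [Set.eq_empty_iff_forall_notMem]
      rintro ω ⟨h1, h2⟩
      exact h ((h2 i).mp h1)
  have hABint : ∀ (i j : Fin N) (s), (A i ∩ A j) ∩ atom s
      = if i ∈ s ∧ j ∈ s then atom s else ∅ := by
    intro i j s
    split_ifs with h
    · ext ω
      simp only [Set.mem_inter_iff, hatom, Set.mem_setOf_eq]
      exact ⟨fun hh => hh.2, fun h2 => ⟨⟨(h2 i).mpr h.1, (h2 j).mpr h.2⟩, h2⟩⟩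
    · rw [Set.eq_empty_iff_forall_notMem]
      rintro ω ⟨⟨h1, h1'⟩, h2⟩
      exact h ⟨(h2 i).mp h1, (h2 j).mp h1'⟩
  have hαq : ∀ i, α i = ∑ s : Finset (Fin N), if i ∈ s then q s else 0 := by
    intro i
    rw [hα i, hsplit (A i) (hA i)]
    apply Finset.sum_congr rfl
    intro s _
    rw [hAint i s]
    split_ifs <;> simp [hq]
  have hγq : ∀ i, γ i = ∑ s : Finset (Fin N), if i ∈ s then (s.card : ℝ) * q s else 0 := by
    intro i
    rw [hγ i]
    have h1 : ∀ j, (P (A i ∩ A j)).toReal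
        = ∑ s : Finset (Fin N), if i ∈ s ∧ j ∈ s then q s else 0 := by
      intro j
      rw [hsplit _ ((hA i).inter (hA j))]
      apply Finset.sum_congr rfl
      intro s _
      rw [hABint i j s]
      split_ifs <;> simp [hq]
    simp only [h1]
    rw [Finset.sum_comm]
    apply Finset.sum_congr rfl
    intro s _
    by_cases h : i ∈ s
    · rw [if_pos h]
      calc ∑ j : Fin N, (if i ∈ s ∧ j ∈ s then q s else 0)
          = ∑ j : Fin N, (if j ∈ s then q s else 0) := by
            apply Finset.sum_congr rfl; intro j _; simp [h]
        _ = (s.card : ℝ) * q s := by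
            rw [Finset.sum_ite_mem, Finset.univ_inter, Finset.sum_const, nsmul_eq_mul]
    · simp [h]
  have hUq : (P (⋃ i, A i)).toReal
      = ∑ s : Finset (Fin N), if s = ∅ then 0 else q s := by
    rw [hsplit _ (MeasurableSet.iUnion hA)]
    apply Finset.sum_congr rfl
    intro s _
    by_cases h : s = ∅
    · subst h
      rw [if_pos rfl]
      have he : (⋃ i, A i) ∩ atom ∅ = ∅ := by
        rw [Set.eq_empty_iff_forall_notMem]
        rintro ω ⟨h1, h2⟩
        obtain ⟨_, ⟨i, rfl⟩, hi⟩ := h1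
        simpa using (h2 i).mp hi
      rw [he]
      simp
    · rw [if_neg h]
      obtain ⟨i, hi⟩ := Finset.nonempty_of_ne_empty h
      have he : (⋃ i, A i) ∩ atom s = atom s := by
        apply Set.inter_eq_self_of_subset_right
        intro ω hω
        exact Set.mem_iUnion.mpr ⟨i, (hω i).mpr hi⟩
      rw [he]
  -- T i and swap
  set T : Fin N → ℝ := fun i =>
    ∑ s : Finset (Fin N), if i ∈ s then q s / (s.card : ℝ) else 0 with hT
  have hswap : ∑ i, T i = ∑ s : Finset (Fin N), if s = ∅ then 0 else q s := by
    rw [Finset.sum_comm]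
    apply Finset.sum_congr rfl
    intro s _
    rw [Finset.sum_ite_mem, Finset.univ_inter, Finset.sum_const, nsmul_eq_mul]
    by_cases h : s = ∅
    · subst h; simp
    · rw [if_neg h]
      have hc : (s.card : ℝ) ≠ 0 := by
        exact_mod_cast Finset.card_ne_zero_of_mem (Finset.nonempty_of_ne_empty h).choose_spec
      field_simp
  have hδ0 : 0 ≤ δ := hδ ▸ le_max_left _ _
  have hcardu : (Finset.univ : Finset (Fin N)).card = N := by simp
  have hδuniv : δ ≤ q Finset.univ := by
    rw [hδ]
    apply max_le (hq0 _)
    apply Finset.sup'_le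
    intro i _
    rw [hγq i, hαq i, Finset.mul_sum, ← Finset.sum_sub_distrib]
    calc ∑ s : Finset (Fin N),
          ((if i ∈ s then (s.card : ℝ) * q s else 0) - ((N:ℝ)-1) * (if i ∈ s then q s else 0))
        ≤ ∑ s : Finset (Fin N), (if s = Finset.univ then q s else 0) := by
          apply Finset.sum_le_sum
          intro s _
          by_cases hu : s = Finset.univ
          · subst hu
            simp only [Finset.mem_univ, if_pos, hcardu]
            nlinarith [hq0 (Finset.univ : Finset (Fin N))]
          · rw [if_neg hu]
            by_cases h : i ∈ s
            · rw [if_pos h, if_pos h]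
              have hlt : s.card < N := by
                have := Finset.card_lt_card (Finset.ssubset_univ_iff.mpr hu)
                simpa [hcardu] using this
              have : (s.card : ℝ) ≤ (N:ℝ) - 1 := by
                have : (s.card : ℝ) + 1 ≤ N := by exact_mod_cast hlt
                linarith
              nlinarith [hq0 s]
            · simp [h]
      _ = q Finset.univ := by rw [Finset.sum_ite_eq' Finset.univ]; simp
  have hN0 : (0:ℝ) < N := by positivity
  -- per-i bound
  have hbound : ∀ i : Fin N,
      (1 / chi (γ' i / α' i) - (γ' i / α' i - chi (γ' i / α' i)) /
        ((1 + chi (γ' i / α' i)) * chi (γ' i / α' i))) * α' i ≤ T i - δ / N := by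
    intro i
    set F : Finset (Finset (Fin N)) := Finset.univ.filter (fun s => i ∈ s) with hF
    set w : Finset (Fin N) → ℝ := fun s => q s + (if s = Finset.univ then -δ else 0) with hw
    have hFuniv : Finset.univ ∈ F := by simp [hF]
    have hqF : ∀ (f : Finset (Fin N) → ℝ),
        ∑ s ∈ F, f s = ∑ s : Finset (Fin N), if i ∈ s then f s else 0 := by
      intro f; rw [hF, Finset.sum_filter]
    have hsum1 : ∑ s ∈ F, w s = α' i := by
      rw [hα' i, hαq i]
      simp only [hw]
      rw [Finset.sum_add_distrib, Finset.sum_ite_eq' F Finset.univ, if_pos hFuniv, hqF]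
      ring
    have hsum2 : ∑ s ∈ F, ((s.card : ℝ)) * w s = γ' i := by
      rw [hγ' i, hγq i]
      simp only [hw, mul_add, mul_ite, mul_neg, mul_zero]
      rw [Finset.sum_add_distrib]
      have h2 : ∑ s ∈ F, (if s = Finset.univ then -((s.card:ℝ) * δ) else 0)
          = -((N:ℝ) * δ) := by
        rw [Finset.sum_ite_eq' F Finset.univ, if_pos hFuniv, hcardu]
      rw [h2, hqF]
      ring
    have hsum3 : ∑ s ∈ F, w s / (s.card : ℝ) = T i - δ / N := by
      rw [hT]
      simp only [hw, add_div, ite_div, zero_div, neg_div]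
      rw [Finset.sum_add_distrib]
      have h2 : ∑ s ∈ F, (if s = Finset.univ then -(δ / (s.card:ℝ)) else 0)
          = -(δ / N) := by
        rw [Finset.sum_ite_eq' F Finset.univ, if_pos hFuniv, hcardu]
      rw [h2, hqF]
      ring
    have hwpos : ∀ s ∈ F, 0 ≤ w s := by
      intro s _
      simp only [hw]
      split_ifs with h
      · subst h; linarith [hδuniv]
      · simpa using hq0 s
    have hcpos : ∀ s ∈ F, 1 ≤ s.card := by
      intro s hs
      rw [hF, Finset.mem_filter] at hs
      exact Finset.card_pos.mpr ⟨i, hs.2⟩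
    have ha : 0 < α' i := by rw [hα' i]; linarith [hδα i]
    have := core F w (fun s => s.card) hwpos hcpos ha hsum1 hsum2
    rw [hsum3] at this
    exact this
  -- assemble
  rw [ge_iff_le, hUq, ← hswap]
  have hsum : ∑ i : Fin N, (T i - δ / N) = (∑ i, T i) - δ := by
    rw [Finset.sum_sub_distrib, Finset.sum_const, Finset.card_univ, Fintype.card_fin,
      nsmul_eq_mul]
    field_simp
  have := Finset.sum_le_sum (fun i (_ : i ∈ Finset.univ) => hbound i)
  rw [hsum] at this
  linarith
end

section
/- (Achievability construction) Let N ≥ 1 and let a_i(k) ≥ 0, for i, k ∈ {1,…,N}, be real numbers satisfying: (i) Σ_{i=1}^N a_i(k) ≥ k·a_j(k) for every j, k ∈ {1,…,N}, and (ii) Σ_{i=1}^N Σ_{k=1}^N a_i(k)/k ≤ 1. Then there exist a probability space (Ω, P) and measurable events A_1, …, A_N in Ω such that P(A_i ∩ {ω : deg(ω) = k}) = a_i(k) for all i, k ∈ {1,…,N}, where deg(ω) = #{i ∈ {1,…,N} : ω ∈ A_i}. -/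
open MeasureTheory Set

namespace Achiev

noncomputable section

variable (N : ℕ) (a : Fin N → ℕ → ℝ)

/-- extended coefficients -/
def bA (i k : ℕ) : ℝ := if h : i < N then a ⟨i, h⟩ k else 0

/-- partial sums (arc endpoints) -/
def CC (n k : ℕ) : ℝ := ∑ i ∈ Finset.range n, bA N a i k

/-- circumference of circle for degree k -/
def mm (k : ℕ) : ℝ := (∑ i : Fin N, a i k) / k

/-- offset of block k -/
def tt (k : ℕ) : ℝ := ∑ k' ∈ Finset.Ico 1 k, mm N a k'

/-- part of event i inside block k -/
def EE (i k : ℕ) : Set ℝ :=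
  ⋃ r ∈ Finset.range k,
    (fun x => x + ((r : ℝ) * mm N a k - tt N a k)) ⁻¹'
      (Ico ((r : ℝ) * mm N a k) ((r : ℝ) * mm N a k + mm N a k) ∩
        Ico (CC N a i k) (CC N a (i + 1) k))

/-- event i -/
def AA (i : ℕ) : Set ℝ := ⋃ k ∈ Finset.Icc 1 N, EE N a i k

/-- local notation for hypotheses -/
def H0 : Prop := ∀ i : Fin N, ∀ k ∈ Finset.Icc 1 N, 0 ≤ a i k
def H1 : Prop := ∀ j : Fin N, ∀ k ∈ Finset.Icc 1 N, ∑ i : Fin N, a i k ≥ (k : ℝ) * a j k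
def H2 : Prop := ∑ i : Fin N, ∑ k ∈ Finset.Icc 1 N, a i k / (k : ℝ) ≤ 1

variable {N a}

lemma bA_nonneg (ha0 : H0 N a) {i k : ℕ} (hk : k ∈ Finset.Icc 1 N) : 0 ≤ bA N a i k := by
  unfold bA; split
  · exact ha0 _ _ hk
  · exact le_rfl

lemma CC_mono (ha0 : H0 N a) {n n' k : ℕ} (hnn : n ≤ n') (hk : k ∈ Finset.Icc 1 N) :
    CC N a n k ≤ CC N a n' k :=
  Finset.sum_le_sum_of_subset_of_nonneg (Finset.range_subset_range.2 hnn)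
    (fun _ _ _ => bA_nonneg ha0 hk)

lemma mm_nonneg (ha0 : H0 N a) {k : ℕ} (hk : k ∈ Finset.Icc 1 N) : 0 ≤ mm N a k :=
  div_nonneg (Finset.sum_nonneg fun i _ => ha0 i k hk) (Nat.cast_nonneg k)

lemma tt_nonneg (ha0 : H0 N a) {k : ℕ} (hk : k ≤ N) : 0 ≤ tt N a k :=
  Finset.sum_nonneg fun k' hk' => mm_nonneg ha0
    (Finset.mem_Icc.2 ⟨(Finset.mem_Ico.1 hk').1,
      le_trans (Nat.le_of_lt_succ (Nat.lt_succ_of_lt (Finset.mem_Ico.1 hk').2)) hk⟩)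

lemma CC_sum {k : ℕ} : CC N a N k = ∑ i : Fin N, a i k := by
  rw [CC, Finset.sum_range (f := fun i => bA N a i k)]
  refine Finset.sum_congr rfl fun i _ => ?_
  simp [bA, i.isLt]

lemma CC_zero {k : ℕ} : CC N a 0 k = 0 := by simp [CC]

lemma CC_succ {i : Fin N} {k : ℕ} : CC N a (i + 1) k = CC N a i k + a i k := by
  rw [CC, CC, Finset.sum_range_succ]
  simp [bA, i.isLt]

lemma CC_last {k : ℕ} (hk : k ∈ Finset.Icc 1 N) : CC N a N k = k * mm N a k := by
  have hk1 : (1:ℝ) ≤ (k:ℝ) := by exact_mod_cast (Finset.mem_Icc.1 hk).1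
  rw [CC_sum, mm, mul_div_cancel₀]
  linarith

lemma a_le_mm (h1 : H1 N a) {i : Fin N} {k : ℕ} (hk : k ∈ Finset.Icc 1 N) :
    a i k ≤ mm N a k := by
  have hk0 : (0:ℝ) < (k:ℝ) := by
    exact_mod_cast Nat.lt_of_lt_of_le Nat.zero_lt_one (Finset.mem_Icc.1 hk).1
  rw [mm, le_div_iff₀ hk0, mul_comm]
  exact h1 i k hk

lemma tt_block (ha0 : H0 N a) {k' k : ℕ} (hk' : 1 ≤ k') (hk : k ≤ N) (h : k' < k) :
    tt N a k' + mm N a k' ≤ tt N a k := by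
  have e1 : tt N a k' + mm N a k' = tt N a (k' + 1) := by
    rw [tt, tt, Finset.sum_Ico_succ_top hk']
  rw [e1, tt, tt]
  apply Finset.sum_le_sum_of_subset_of_nonneg (Finset.Ico_subset_Ico le_rfl h)
  intro k'' hk'' _
  exact mm_nonneg ha0 (Finset.mem_Icc.2 ⟨(Finset.mem_Ico.1 hk'').1,
    le_trans (Nat.le_of_lt_succ (Nat.lt_succ_of_lt (Finset.mem_Ico.1 hk'').2)) hk⟩)

lemma mm_eq {k : ℕ} : mm N a k = ∑ i : Fin N, a i k / k := by
  rw [mm, Finset.sum_div]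

lemma tt_le_one (ha0 : H0 N a) (h2 : H2 N a) {k : ℕ} (hk : k ∈ Finset.Icc 1 N) :
    tt N a k + mm N a k ≤ 1 := by
  obtain ⟨hk1, hkN⟩ := Finset.mem_Icc.1 hk
  have key : tt N a k + mm N a k = ∑ k' ∈ Finset.Ico 1 (k+1), mm N a k' := by
    rw [tt, Finset.sum_Ico_succ_top hk1]
  rw [key]
  calc ∑ k' ∈ Finset.Ico 1 (k+1), mm N a k'
      ≤ ∑ k' ∈ Finset.Icc 1 N, mm N a k' := by
        apply Finset.sum_le_sum_of_subset_of_nonneg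
        · intro k'' hk''
          rw [Finset.mem_Ico] at hk''
          exact Finset.mem_Icc.2 ⟨hk''.1, Nat.le_of_lt_succ (Nat.lt_of_lt_of_le hk''.2
            (Nat.succ_le_succ hkN))⟩
        · intro k'' hk'' _
          exact mm_nonneg ha0 hk''
    _ = ∑ i : Fin N, ∑ k' ∈ Finset.Icc 1 N, a i k' / k' := by
        rw [Finset.sum_comm]
        exact Finset.sum_congr rfl fun k' _ => mm_eq
    _ ≤ 1 := h2

lemma EE_subset {i k : ℕ} : EE N a i k ⊆ Ico (tt N a k) (tt N a k + mm N a k) := by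
  intro x hx
  simp only [EE, Finset.mem_range, mem_iUnion, mem_preimage, mem_inter_iff, mem_Ico] at hx
  obtain ⟨r, _, ⟨h1, h2⟩, _⟩ := hx
  constructor <;> [linarith; linarith]

lemma EE_measurable {i k : ℕ} : MeasurableSet (EE N a i k) := by
  apply MeasurableSet.biUnion (Finset.range k).countable_toSet
  intro r _
  exact (measurableSet_Ico.inter measurableSet_Ico).preimage (measurable_add_const _)

lemma AA_measurable {i : ℕ} : MeasurableSet (AA N a i) :=
  MeasurableSet.biUnion (Finset.Icc 1 N).countable_toSet fun _ _ => EE_measurable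

/-- union of the r-blocks is [0, k m) -/
lemma iUnion_blocks' {m : ℝ} (hm : 0 ≤ m) (k : ℕ) :
    ⋃ r ∈ Finset.range k, Ico ((r : ℝ) * m) ((r : ℝ) * m + m) = Ico 0 ((k : ℝ) * m) := by
  ext x
  simp only [Finset.mem_range, mem_iUnion, mem_Ico, exists_prop]
  constructor
  · rintro ⟨r, hr, h1, h2⟩
    have hrk : (r:ℝ) + 1 ≤ (k:ℝ) := by exact_mod_cast hr
    have hr0 : (0:ℝ) ≤ (r:ℝ)*m := mul_nonneg (Nat.cast_nonneg r) hm
    exact ⟨by linarith, by nlinarith⟩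
  · rintro ⟨h1, h2⟩
    have hm0 : 0 < m := by
      rcases lt_or_eq_of_le hm with h | h
      · exact h
      · exfalso; rw [← h] at h2; simp at h2; linarith
    have h0 : 0 ≤ ⌊x/m⌋ := Int.floor_nonneg.2 (div_nonneg h1 hm0.le)
    have hfl : (⌊x/m⌋ : ℝ) ≤ x/m := Int.floor_le _
    have hfl2 : x/m < ⌊x/m⌋ + 1 := Int.lt_floor_add_one _
    have hcast' : (⌊x/m⌋.toNat : ℝ) = (⌊x/m⌋ : ℝ) := by
      have := Int.toNat_of_nonneg h0
      exact_mod_cast congrArg (fun z : ℤ => (z : ℝ)) this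
    refine ⟨⌊x/m⌋.toNat, ?_, ?_, ?_⟩
    · have hxk : x/m < k := by rw [div_lt_iff₀ hm0]; linarith
      have h3 : ⌊x/m⌋ < (k:ℤ) := by exact_mod_cast lt_of_le_of_lt hfl hxk
      omega
    · rw [hcast', ← le_div_iff₀ hm0]; exact hfl
    · rw [hcast']
      have := (div_lt_iff₀ hm0).1 hfl2
      linarith

lemma vol_aux (k : ℕ) (m t Ci Ci1 ai : ℝ) (hm : 0 ≤ m) (hai : Ci1 = Ci + ai)
    (haim : ai ≤ m) (hCi0 : 0 ≤ Ci) (hCi1 : Ci1 ≤ k * m) :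
    volume (⋃ r ∈ Finset.range k,
      (fun x => x + ((r : ℝ) * m - t)) ⁻¹'
        (Ico ((r : ℝ) * m) ((r : ℝ) * m + m) ∩ Ico Ci Ci1)) = ENNReal.ofReal ai := by
  set piece := fun r : ℕ => (fun x => x + ((r : ℝ) * m - t)) ⁻¹'
    (Ico ((r : ℝ) * m) ((r : ℝ) * m + m) ∩ Ico Ci Ci1) with hpiece
  have key : ∀ r r' : ℕ, r < r' → Disjoint (piece r) (piece r') := by
    intro r r' h
    apply Set.disjoint_left.2
    intro x hx hx'
    simp only [hpiece, mem_preimage, mem_inter_iff, mem_Ico] at hx hx'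
    have h1 : (r:ℝ) + 1 ≤ (r':ℝ) := by exact_mod_cast h
    nlinarith [hx.2.1, hx.2.2, hx'.2.1, hx'.2.2]
  have hdisj : (↑(Finset.range k) : Set ℕ).PairwiseDisjoint piece :=
    fun r _ r' _ hne => hne.lt_or_gt.elim (key r r') (fun h => (key r' r h).symm)
  rw [measure_biUnion_finset hdisj (fun r _ => ((measurableSet_Ico.inter
    measurableSet_Ico).preimage (measurable_add_const _)))]
  have hvol : ∀ r : ℕ, volume (piece r)
      = volume (Ico ((r : ℝ) * m) ((r : ℝ) * m + m) ∩ Ico Ci Ci1) := by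
    intro r
    rw [hpiece]
    simp only [Ico_inter_Ico, preimage_add_const_Ico]
    rw [Real.volume_Ico, Real.volume_Ico]
    ring_nf
  rw [Finset.sum_congr rfl (fun r _ => hvol r)]
  have key2 : ∀ r r' : ℕ, r < r' →
      Disjoint (Ico ((r : ℝ) * m) ((r : ℝ) * m + m) ∩ Ico Ci Ci1)
        (Ico ((r' : ℝ) * m) ((r' : ℝ) * m + m) ∩ Ico Ci Ci1) := by
    intro r r' h
    have h1 : (r:ℝ) + 1 ≤ (r':ℝ) := by exact_mod_cast h
    have hstep : (r:ℝ)*m + m ≤ (r':ℝ)*m := by nlinarith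
    refine ((Ico_disjoint_Ico.2 ?_).mono inter_subset_left inter_subset_left)
    exact le_trans (min_le_left _ _) (le_trans hstep (le_max_right _ _))
  have hdisj2 : (↑(Finset.range k) : Set ℕ).PairwiseDisjoint
      (fun r : ℕ => Ico ((r : ℝ) * m) ((r : ℝ) * m + m) ∩ Ico Ci Ci1) :=
    fun r _ r' _ hne => hne.lt_or_gt.elim (key2 r r') (fun h => (key2 r' r h).symm)
  rw [← measure_biUnion_finset hdisj2 (fun r _ => measurableSet_Ico.inter measurableSet_Ico),
    ← Set.iUnion₂_inter, iUnion_blocks' hm, inter_eq_self_of_subset_right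
      (Ico_subset_Ico hCi0 hCi1), Real.volume_Ico, hai]
  ring_nf

lemma EE_volume (ha0 : H0 N a) (h1 : H1 N a) {i : Fin N} {k : ℕ} (hk : k ∈ Finset.Icc 1 N) :
    volume (EE N a i (k : ℕ)) = ENNReal.ofReal (a i k) := by
  rw [EE]
  refine vol_aux k (mm N a k) (tt N a k) _ _ _ (mm_nonneg ha0 hk) CC_succ
    (a_le_mm h1 hk) ?_ ?_
  · rw [← CC_zero (N := N) (a := a) (k := k)]
    exact CC_mono ha0 (Nat.zero_le _) hk
  · rw [← CC_last hk]
    exact CC_mono ha0 i.isLt hk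

lemma find_interval (C : ℕ → ℝ) (z : ℝ) (M : ℕ) (h0 : C 0 ≤ z) (hM : z < C M) :
    ∃ i : ℕ, i < M ∧ C i ≤ z ∧ z < C (i+1) := by
  classical
  set g := Nat.findGreatest (fun n => C n ≤ z) M with hg
  have hspec : C g ≤ z := by
    simpa using Nat.findGreatest_spec (P := fun n => C n ≤ z) (Nat.zero_le M) h0
  have hle : g ≤ M := Nat.findGreatest_le M
  have hne : g ≠ M := fun h => absurd hspec (by rw [h]; exact not_le.2 hM)
  have hlt : g < M := lt_of_le_of_ne hle hne
  have hgr : ¬ C (g+1) ≤ z :=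
    Nat.findGreatest_is_greatest (Nat.lt_succ_self g) hlt
  exact ⟨g, hlt, hspec, not_le.1 hgr⟩

lemma mem_EE_iff {i k : ℕ} {x : ℝ}
    (hx : x ∈ Ico (tt N a k) (tt N a k + mm N a k)) :
    x ∈ EE N a i k ↔ ∃ r < k, CC N a i k ≤ x - tt N a k + r * mm N a k ∧
      x - tt N a k + r * mm N a k < CC N a (i+1) k := by
  obtain ⟨hx1, hx2⟩ := hx
  simp only [EE, Finset.mem_range, mem_iUnion, mem_preimage, mem_inter_iff, mem_Ico,
    exists_prop]
  constructor
  · rintro ⟨r, hr, _, h3, h4⟩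
    exact ⟨r, hr, by linarith, by linarith⟩
  · rintro ⟨r, hr, h3, h4⟩
    exact ⟨r, hr, ⟨by linarith, by linarith⟩, by linarith, by linarith⟩

lemma block_of_mem_AA (ha0 : H0 N a) {j k : ℕ} (hk : k ∈ Finset.Icc 1 N) {x : ℝ}
    (hx : x ∈ Ico (tt N a k) (tt N a k + mm N a k)) (hA : x ∈ AA N a j) :
    x ∈ EE N a j k := by
  obtain ⟨hk1, hkN⟩ := Finset.mem_Icc.1 hk
  simp only [AA, mem_iUnion, exists_prop] at hA
  obtain ⟨k', hk', hE⟩ := hA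
  obtain ⟨hk'1, hk'N⟩ := Finset.mem_Icc.1 hk'
  have hxb : x ∈ Ico (tt N a k') (tt N a k' + mm N a k') := EE_subset hE
  obtain ⟨hx1, hx2⟩ := hx
  obtain ⟨hy1, hy2⟩ := hxb
  have : k' = k := by
    by_contra hne
    rcases Nat.lt_or_ge k' k with h | h
    · have := tt_block ha0 hk'1 hkN h
      linarith
    · have hlt : k < k' := lt_of_le_of_ne h (fun e => hne e.symm)
      have := tt_block ha0 hk1 hk'N hlt
      linarith
  rwa [this] at hE

lemma deg_eq (ha0 : H0 N a) (h1 : H1 N a) {k : ℕ} (hk : k ∈ Finset.Icc 1 N) {x : ℝ}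
    (hx : x ∈ Ico (tt N a k) (tt N a k + mm N a k)) :
    Nat.card {j : Fin N // x ∈ AA N a (j : ℕ)} = k := by
  obtain ⟨hx1, hx2⟩ := hx
  set m := mm N a k with hm
  set t := tt N a k with ht
  have hm0 : 0 < m := by linarith
  set z : ℕ → ℝ := fun r => x - t + r * m with hz
  have hz0 : ∀ r : ℕ, CC N a 0 k ≤ z r := by
    intro r
    rw [CC_zero, hz]
    have : (0:ℝ) ≤ (r:ℝ) * m := mul_nonneg (Nat.cast_nonneg r) hm0.le
    simp only
    linarith
  have hzN : ∀ r : ℕ, r < k → z r < CC N a N k := by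
    intro r hr
    rw [CC_last hk, ← hm]
    have hrk : (r:ℝ) + 1 ≤ (k:ℝ) := by exact_mod_cast hr
    simp only [hz]
    nlinarith
  have hstep : ∀ n, n < N → CC N a (n+1) k ≤ CC N a n k + m := by
    intro n hn
    have := CC_succ (N := N) (a := a) (i := ⟨n, hn⟩) (k := k)
    simp only at this
    rw [this]
    have := a_le_mm (a := a) h1 (i := ⟨n, hn⟩) hk
    linarith
  -- choose the arc index for each rotation r
  have hch : ∀ r : Fin k, ∃ i : ℕ, i < N ∧ CC N a i k ≤ z r ∧ z r < CC N a (i+1) k :=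
    fun r => find_interval _ _ _ (hz0 r) (hzN r r.isLt)
  choose f hf1 hf2 hf3 using hch
  -- uniqueness of arc index
  have huniq : ∀ (r : Fin k) (j : Fin N),
      CC N a j k ≤ z r → z r < CC N a ((j:ℕ)+1) k → (j : ℕ) = f r := by
    intro r j hj1 hj2
    by_contra hne
    rcases Nat.lt_or_ge (j : ℕ) (f r) with h | h
    · have : CC N a ((j:ℕ)+1) k ≤ CC N a (f r) k := CC_mono ha0 h hk
      linarith [hf2 r]
    · have hlt : f r < (j:ℕ) := lt_of_le_of_ne h (fun e => hne e.symm)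
      have : CC N a (f r + 1) k ≤ CC N a (j:ℕ) k := CC_mono ha0 hlt hk
      linarith [hf3 r]
  -- membership characterization
  have hmem : ∀ j : Fin N, x ∈ AA N a (j : ℕ) ↔ ∃ r : Fin k, f r = (j : ℕ) := by
    intro j
    constructor
    · intro hA
      have hE := block_of_mem_AA ha0 hk ⟨hx1, hx2⟩ hA
      rw [mem_EE_iff ⟨hx1, hx2⟩] at hE
      obtain ⟨r, hr, h3, h4⟩ := hE
      exact ⟨⟨r, hr⟩, (huniq ⟨r, hr⟩ j h3 h4).symm⟩
    · rintro ⟨r, hr⟩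
      have hE : x ∈ EE N a (j : ℕ) k := by
        rw [mem_EE_iff ⟨hx1, hx2⟩]
        refine ⟨(r : ℕ), r.isLt, ?_, ?_⟩
        · rw [← hr]; exact hf2 r
        · rw [← hr]; exact hf3 r
      exact Set.mem_biUnion hk hE
  -- injectivity
  have hinj : Function.Injective f := by
    intro r r' he
    by_contra hne
    have hrne : (r : ℕ) ≠ (r' : ℕ) := fun h => hne (Fin.ext h)
    have key : ∀ s s' : Fin k, (s : ℕ) < (s' : ℕ) → f s = f s' → False := by
      intro s s' hlt hfe
      have h1' : (s:ℝ) + 1 ≤ (s':ℝ) := by exact_mod_cast hlt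
      have e2 : z s' - z s = ((s':ℝ) - s) * m := by simp only [hz]; ring
      have b1 := hf2 s
      have b2 := hf3 s
      have b3 := hf2 s'
      have b4 := hf3 s'
      rw [hfe] at b1 b2
      have hst := hstep (f s') (hf1 s')
      nlinarith
    rcases Nat.lt_or_ge (r : ℕ) (r' : ℕ) with h | h
    · exact key r r' h he
    · exact key r' r (lt_of_le_of_ne h (fun e => hrne e.symm)) he.symm
  -- build the bijection
  let g : Fin k → {j : Fin N // x ∈ AA N a (j : ℕ)} :=
    fun r => ⟨⟨f r, hf1 r⟩, (hmem ⟨f r, hf1 r⟩).2 ⟨r, rfl⟩⟩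
  have hbij : Function.Bijective g := by
    constructor
    · intro r r' he
      apply hinj
      have : (⟨f r, hf1 r⟩ : Fin N) = ⟨f r', hf1 r'⟩ := congrArg Subtype.val he
      exact congrArg Fin.val this
    · rintro ⟨j, hj⟩
      obtain ⟨r, hr⟩ := (hmem j).1 hj
      exact ⟨r, Subtype.ext (Fin.ext hr)⟩
  have := Nat.card_eq_of_bijective g hbij
  simpa using this.symm

lemma inter_deg (ha0 : H0 N a) (h1 : H1 N a) {i : Fin N} {k : ℕ} (hk : k ∈ Finset.Icc 1 N) :
    AA N a (i : ℕ) ∩ {x | Nat.card {j : Fin N // x ∈ AA N a (j : ℕ)} = k} = EE N a i k := by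
  ext x
  constructor
  · rintro ⟨hA, hdeg⟩
    simp only [mem_setOf_eq] at hdeg
    have hA' := hA
    simp only [AA, mem_iUnion, exists_prop] at hA'
    obtain ⟨k', hk', hE⟩ := hA'
    have hxb := EE_subset hE
    have : Nat.card {j : Fin N // x ∈ AA N a (j : ℕ)} = k' := deg_eq ha0 h1 hk' hxb
    rw [hdeg] at this
    rw [this]
    exact block_of_mem_AA ha0 hk' hxb hA
  · intro hE
    have hxb := EE_subset hE
    exact ⟨Set.mem_biUnion hk hE, deg_eq ha0 h1 hk hxb⟩

end
end Achiev

open Achiev in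
/-- Achievability construction: any nonnegative numbers `a i k` satisfying
`∑ i, a i k ≥ k * a j k` for all `j, k ∈ {1,…,N}` and `∑ i ∑ k, a i k / k ≤ 1`
arise as `a i k = P(A i ∩ {deg = k})` for some probability space and events. -/
theorem achievability_construction (N : ℕ) (hN : 1 ≤ N) (a : Fin N → ℕ → ℝ)
    (ha0 : ∀ i : Fin N, ∀ k ∈ Finset.Icc 1 N, 0 ≤ a i k)
    (h1 : ∀ j : Fin N, ∀ k ∈ Finset.Icc 1 N, ∑ i : Fin N, a i k ≥ (k : ℝ) * a j k)
    (h2 : ∑ i : Fin N, ∑ k ∈ Finset.Icc 1 N, a i k / (k : ℝ) ≤ 1) :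
    ∃ (Ω : Type) (_ : MeasurableSpace Ω) (P : Measure Ω) (_ : IsProbabilityMeasure P)
      (A : Fin N → Set Ω), (∀ i, MeasurableSet (A i)) ∧
      ∀ i : Fin N, ∀ k ∈ Finset.Icc 1 N,
        (P (A i ∩ {ω | Nat.card {j : Fin N // ω ∈ A j} = k})).toReal = a i k := by
  refine ⟨ℝ, inferInstance, volume.restrict (Ico 0 1), ⟨?_⟩, fun i => AA N a (i : ℕ),
    fun i => AA_measurable, ?_⟩
  · rw [Measure.restrict_apply_univ]; simp [Real.volume_Ico]
  · intro i k hk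
    rw [inter_deg ha0 h1 hk, Measure.restrict_apply EE_measurable]
    have hsub : EE N a (i : ℕ) k ⊆ Ico (0:ℝ) 1 :=
      subset_trans EE_subset (Ico_subset_Ico (tt_nonneg ha0 (Finset.mem_Icc.1 hk).2)
        (tt_le_one ha0 h2 hk))
    rw [inter_eq_self_of_subset_left hsub, EE_volume ha0 h1 hk,
      ENNReal.toReal_ofReal (ha0 i k hk)]
end

section
/- (Optimal numerical lower bound) Let N ≥ 1 and let α_1,…,α_N, γ_1,…,γ_N be real numbers such that there exists at least one probability space (Ω, P) with measurable events A_1,…,A_N satisfying P(A_i) = α_i and Σ_{j=1}^N P(A_i ∩ A_j) = γ_i for all i. Then the infimum of P(⋃_{i=1}^N A_i), taken over all probability spaces and measurable events A_1,…,A_N satisfying P(A_i) = α_i and Σ_{j=1}^N P(A_i ∩ A_j) = γ_i for all i, is equal to the infimum of Σ_{i=1}^N Σ_{k=1}^N a_i(k)/k over all real numbers a_i(k) ≥ 0 (i, k ∈ {1,…,N}) satisfying Σ_{k=1}^N a_i(k) = α_i and Σ_{k=1}^N k·a_i(k) = γ_i for all i, and Σ_{i=1}^N a_i(k) ≥ k·a_j(k)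 for all j, k ∈ {1,…,N}. -/
set_option maxHeartbeats 1000000

open MeasureTheory

open scoped Classical

lemma count_sum {Ω : Type*} [MeasurableSpace Ω] (P : Measure Ω) {N : ℕ}
    (A : Fin N → Set Ω) (hA : ∀ i, MeasurableSet (A i)) {E : Set Ω} (hE : MeasurableSet E)
    {k : ℕ} (hcount : ∀ x ∈ E, (Finset.univ.filter fun j => x ∈ A j).card = k) :
    ∑ j, P (E ∩ A j) = k * P E := by
  have h1 : ∀ j, P (E ∩ A j) = ∫⁻ x in E, (A j).indicator (fun _ => (1:ENNReal)) x ∂P := by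
    intro j
    rw [lintegral_indicator (hA j), setLIntegral_one, Measure.restrict_apply (hA j),
      Set.inter_comm]
  simp_rw [h1]
  rw [← lintegral_finset_sum _ (fun j _ => measurable_const.indicator (hA j))]
  rw [setLIntegral_congr_fun hE (g := fun _ => (k : ENNReal)) ?_, setLIntegral_const]
  · intro x hx
    have h2 : ∀ j, (A j).indicator (fun _ => (1:ENNReal)) x = if x ∈ A j then 1 else 0 := by
      intro j; simp [Set.indicator_apply]
    simp_rw [h2]
    rw [Finset.sum_ite, Finset.sum_const, Finset.sum_const_zero, hcount x hx]
    simp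

lemma exists_step (f : ℕ → ℝ) (n : ℕ) (z : ℝ) (h0 : f 0 ≤ z) (hn : z < f n) :
    ∃ i, i < n ∧ f i ≤ z ∧ z < f (i+1) := by
  induction n with
  | zero => exact absurd (lt_of_le_of_lt h0 hn) (lt_irrefl _)
  | succ n ih =>
    by_cases h : f n ≤ z
    · exact ⟨n, Nat.lt_succ_self n, h, hn⟩
    · obtain ⟨i, hi, h1, h2⟩ := ih (lt_of_not_ge h)
      exact ⟨i, Nat.lt_succ_of_lt hi, h1, h2⟩

lemma sum_chunks (k : ℕ) : ∀ (b e q : ℝ), 0 ≤ q → 0 ≤ b → b ≤ e → e ≤ k * q →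
    ∑ m ∈ Finset.range k, max 0 (min e ((m+1) * q) - max b (m * q)) = e - b := by
  induction k with
  | zero => intro b e q hq hb hbe he; simp at he ⊢; linarith
  | succ k ih =>
    intro b e q hq hb hbe he
    push_cast at he
    rw [Finset.sum_range_succ]
    by_cases h1 : e ≤ k * q
    · rw [ih b e q hq hb hbe h1]
      have hx : min e (((k:ℝ)+1) * q) - max b (k * q) ≤ 0 := by
        have := le_max_right b ((k:ℝ) * q)
        have := min_le_left e (((k:ℝ)+1) * q)
        linarith
      rw [max_eq_left hx]; ring
    · push_neg at h1
      by_cases h2 : b ≤ k * q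
      · have heq : ∀ m ∈ Finset.range k,
            max 0 (min ((k:ℝ)*q) ((m+1) * q) - max b (m * q)) =
            max 0 (min e ((m+1) * q) - max b (m * q)) := by
          intro m hm
          rw [Finset.mem_range] at hm
          have hm1 : ((m:ℝ)+1) * q ≤ k * q := by
            have : ((m:ℝ)+1) ≤ k := by exact_mod_cast hm
            nlinarith
          rw [min_eq_right hm1, min_eq_right (le_trans hm1 h1.le)]
        rw [← Finset.sum_congr rfl heq, ih b (k*q) q hq hb h2 le_rfl]
        rw [min_eq_left he, max_eq_right h2, max_eq_right (by linarith)]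
        ring
      · push_neg at h2
        have hz : ∀ m ∈ Finset.range k, max 0 (min e ((m+1) * q) - max b (m * q)) = 0 := by
          intro m hm
          rw [Finset.mem_range] at hm
          have hm1 : ((m:ℝ)+1) * q ≤ k * q := by
            have : ((m:ℝ)+1) ≤ k := by exact_mod_cast hm
            nlinarith
          have := le_max_left b ((m:ℝ) * q)
          have := min_le_right e (((m:ℝ)+1) * q)
          rw [max_eq_left]; linarith
        rw [Finset.sum_eq_zero hz]
        rw [min_eq_left he, max_eq_left h2.le, max_eq_right (by linarith)]
        ring

lemma measure_to_LP {N : ℕ} {Ω : Type} [MeasurableSpace Ω] (P : Measure Ω)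
    [IsProbabilityMeasure P] (A : Fin N → Set Ω) (hA : ∀ i, MeasurableSet (A i)) :
    ∃ a : Fin N → ℕ → ℝ,
      (∀ i, ∀ k ∈ Finset.Icc 1 N, 0 ≤ a i k) ∧
      (∀ i, ∑ k ∈ Finset.Icc 1 N, a i k = (P (A i)).toReal) ∧
      (∀ i, ∑ k ∈ Finset.Icc 1 N, (k:ℝ) * a i k = ∑ j, (P (A i ∩ A j)).toReal) ∧
      (∀ j, ∀ k ∈ Finset.Icc 1 N, ∑ i, a i k ≥ (k:ℝ) * a j k) ∧
      (P (⋃ i, A i)).toReal = ∑ i, ∑ k ∈ Finset.Icc 1 N, a i k / (k:ℝ) := by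
  set S : Ω → ℕ := fun x => (Finset.univ.filter fun j => x ∈ A j).card with hSdef
  have hS : Measurable S := by
    have h1 : Measurable fun x => ∑ j : Fin N, if x ∈ A j then (1:ℕ) else 0 :=
      Finset.measurable_sum _ (fun j _ => Measurable.ite (hA j) measurable_const
        measurable_const)
    have h2 : S = fun x => ∑ j : Fin N, if x ∈ A j then (1:ℕ) else 0 := by
      funext x; exact Finset.card_filter _ _
    rw [h2]; exact h1
  set Ek : ℕ → Set Ω := fun k => S ⁻¹' {k} with hEkdef
  have hEk : ∀ k, MeasurableSet (Ek k) := fun k => hS (measurableSet_singleton k)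
  have hEkcount : ∀ k, ∀ x ∈ Ek k, (Finset.univ.filter fun j => x ∈ A j).card = k :=
    fun k x hx => hx
  have hEksub : ∀ k, 1 ≤ k → Ek k ⊆ ⋃ i, A i := by
    intro k hk x hx
    have : (Finset.univ.filter fun j => x ∈ A j).Nonempty := by
      rw [← Finset.card_pos, hEkcount k x hx]; omega
    obtain ⟨j, hj⟩ := this
    exact Set.mem_iUnion.mpr ⟨j, (Finset.mem_filter.mp hj).2⟩
  have hUeq : ∀ X : Set Ω, X ⊆ (⋃ i, A i) → X = ⋃ k ∈ Finset.Icc 1 N, X ∩ Ek k := by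
    intro X hsub
    ext x
    constructor
    · intro hx
      refine Set.mem_iUnion₂.mpr ⟨S x, ?_, ⟨hx, rfl⟩⟩
      rw [Finset.mem_Icc]
      constructor
      · obtain ⟨j, hj⟩ := Set.mem_iUnion.mp (hsub hx)
        have : j ∈ Finset.univ.filter fun j => x ∈ A j := Finset.mem_filter.mpr ⟨Finset.mem_univ _, hj⟩
        exact Finset.card_pos.mpr ⟨j, this⟩
      · exact le_trans (Finset.card_filter_le _ _) (by simp)
    · intro hx
      obtain ⟨k, _, hx, _⟩ := Set.mem_iUnion₂.mp hx
      exact hx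
  have hdisj : ∀ X : Set Ω, Set.PairwiseDisjoint ↑(Finset.Icc 1 N) (fun k => X ∩ Ek k) := by
    intro X k _ k' _ hne
    apply Set.disjoint_left.mpr
    rintro x ⟨_, hx⟩ ⟨_, hx'⟩
    exact hne (hx.symm.trans hx')
  have hpart : ∀ X : Set Ω, MeasurableSet X → X ⊆ (⋃ i, A i) →
      P X = ∑ k ∈ Finset.Icc 1 N, P (X ∩ Ek k) := by
    intro X hX hsub
    rw [← measure_biUnion_finset (hdisj X) (fun k _ => hX.inter (hEk k))]
    exact congrArg P (hUeq X hsub)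
  have hfin : ∀ X : Set Ω, P X ≠ ⊤ := fun X => measure_ne_top P X
  have hAsub : ∀ i, A i ⊆ ⋃ i, A i := fun i => Set.subset_iUnion A i
  refine ⟨fun i k => (P (A i ∩ Ek k)).toReal, ?_, ?_, ?_, ?_, ?_⟩
  · intro i k _; exact ENNReal.toReal_nonneg
  · intro i
    rw [← ENNReal.toReal_sum (fun k _ => hfin _), ← hpart (A i) (hA i) (hAsub i)]
  · intro i
    have h1 : ∀ j, (P (A i ∩ A j)).toReal
        = ∑ k ∈ Finset.Icc 1 N, (P (A i ∩ A j ∩ Ek k)).toReal := by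
      intro j
      rw [← ENNReal.toReal_sum (fun k _ => hfin _),
        ← hpart _ ((hA i).inter (hA j)) (fun x hx => hAsub i hx.1)]
    simp_rw [h1]
    rw [Finset.sum_comm]
    refine Finset.sum_congr rfl (fun k hk => ?_)
    have h2 : ∑ j, P ((A i ∩ Ek k) ∩ A j) = k * P (A i ∩ Ek k) :=
      count_sum P A hA ((hA i).inter (hEk k)) (fun x hx => hEkcount k x hx.2)
    have h3 : ∀ j, A i ∩ A j ∩ Ek k = (A i ∩ Ek k) ∩ A j := by
      intro j; ext x; simp only [Set.mem_inter_iff]; tauto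
    simp_rw [h3]
    rw [← ENNReal.toReal_sum (fun j _ => hfin _), h2, ENNReal.toReal_mul]
    simp
  · intro j k hk
    have h2 : ∑ i, P (Ek k ∩ A i) = k * P (Ek k) :=
      count_sum P A hA (hEk k) (hEkcount k)
    have h4 : ∀ i, A i ∩ Ek k = Ek k ∩ A i := fun i => Set.inter_comm _ _
    simp_rw [h4]
    have h5 : ∑ i, (P (Ek k ∩ A i)).toReal = (k : ℝ) * (P (Ek k)).toReal := by
      rw [← ENNReal.toReal_sum (fun i _ => hfin _), h2, ENNReal.toReal_mul]
      simp
    rw [h5]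
    have h6 : P (Ek k ∩ A j) ≤ P (Ek k) := measure_mono Set.inter_subset_left
    have h7 : (P (Ek k ∩ A j)).toReal ≤ (P (Ek k)).toReal :=
      ENNReal.toReal_mono (hfin _) h6
    have : (0:ℝ) ≤ (k:ℝ) := Nat.cast_nonneg k
    nlinarith
  · rw [Finset.sum_comm]
    have h8 : ∀ k ∈ Finset.Icc 1 N, ∑ i, (P (A i ∩ Ek k)).toReal / (k:ℝ)
        = (P (Ek k)).toReal := by
      intro k hk
      rw [Finset.mem_Icc] at hk
      have hk0 : (k:ℝ) ≠ 0 := Nat.cast_ne_zero.mpr (by omega)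
      have h2 : ∑ i, P (Ek k ∩ A i) = k * P (Ek k) :=
        count_sum P A hA (hEk k) (hEkcount k)
      have h4 : ∀ i, A i ∩ Ek k = Ek k ∩ A i := fun i => Set.inter_comm _ _
      simp_rw [h4]
      rw [← Finset.sum_div, ← ENNReal.toReal_sum (fun i _ => hfin _), h2,
        ENNReal.toReal_mul]
      simp [hk0]
    rw [Finset.sum_congr rfl h8]
    have h9 : P (⋃ i, A i) = ∑ k ∈ Finset.Icc 1 N, P (Ek k) := by
      have := hpart (⋃ i, A i) (MeasurableSet.iUnion (fun i => hA i)) (le_refl _)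
      rw [this]
      refine Finset.sum_congr rfl (fun k hk => ?_)
      rw [Finset.mem_Icc] at hk
      rw [Set.inter_eq_right.mpr (hEksub k hk.1)]
    rw [h9, ENNReal.toReal_sum (fun k _ => hfin _)]

lemma LP_to_measure {N : ℕ} (hN : 1 ≤ N) (a : Fin N → ℕ → ℝ)
    (h0 : ∀ i, ∀ k ∈ Finset.Icc 1 N, 0 ≤ a i k)
    (hcon : ∀ j, ∀ k ∈ Finset.Icc 1 N, ∑ i, a i k ≥ (k:ℝ) * a j k)
    (hv1 : ∑ i, ∑ k ∈ Finset.Icc 1 N, a i k / (k:ℝ) ≤ 1) :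
    ∃ (Ω : Type) (_ : MeasurableSpace Ω) (P : Measure Ω) (_ : IsProbabilityMeasure P)
      (A : Fin N → Set Ω), (∀ i, MeasurableSet (A i)) ∧
      (∀ i, (P (A i)).toReal = ∑ k ∈ Finset.Icc 1 N, a i k) ∧
      (∀ i, ∑ j, (P (A i ∩ A j)).toReal = ∑ k ∈ Finset.Icc 1 N, (k:ℝ) * a i k) ∧
      (P (⋃ i, A i)).toReal = ∑ i, ∑ k ∈ Finset.Icc 1 N, a i k / (k:ℝ) := by
  -- basic definitions
  set q : ℕ → ℝ := fun k => (∑ i, a i k) / k with hqdef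
  have hq0 : ∀ k ∈ Finset.Icc 1 N, 0 ≤ q k := by
    intro k hk
    exact div_nonneg (Finset.sum_nonneg fun i _ => h0 i k hk) (Nat.cast_nonneg k)
  have hkq : ∀ k ∈ Finset.Icc 1 N, (k:ℝ) * q k = ∑ i, a i k := by
    intro k hk
    rw [Finset.mem_Icc] at hk
    have : (k:ℝ) ≠ 0 := Nat.cast_ne_zero.mpr (by omega)
    show (k:ℝ) * ((∑ i, a i k) / k) = _
    field_simp
  have haq : ∀ i, ∀ k ∈ Finset.Icc 1 N, a i k ≤ q k := by
    intro i k hk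
    have h1 := hcon i k hk
    rw [← hkq k hk] at h1
    have hkpos : (0:ℝ) < k := by
      rw [Finset.mem_Icc] at hk; exact_mod_cast Nat.lt_of_lt_of_le Nat.zero_lt_one hk.1
    exact le_of_mul_le_mul_left h1 hkpos
  set a' : ℕ → ℕ → ℝ := fun n k => if h : n < N then a ⟨n, h⟩ k else 0 with ha'def
  have ha'0 : ∀ n, ∀ k ∈ Finset.Icc 1 N, 0 ≤ a' n k := by
    intro n k hk
    by_cases h : n < N
    · simp only [ha'def, dif_pos h]; exact h0 _ k hk
    · simp [ha'def, dif_neg h]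
  set t : ℕ → ℕ → ℝ := fun k n => ∑ m ∈ Finset.range n, a' m k with htdef
  have ht0 : ∀ k, t k 0 = 0 := by intro k; simp [htdef]
  have ht_mono : ∀ k ∈ Finset.Icc 1 N, ∀ n n' : ℕ, n ≤ n' → t k n ≤ t k n' := by
    intro k hk n n' h
    exact Finset.sum_le_sum_of_subset_of_nonneg (Finset.range_subset_range.mpr h)
      (fun m _ _ => ha'0 m k hk)
  have ht_nonneg : ∀ k ∈ Finset.Icc 1 N, ∀ n, 0 ≤ t k n := by
    intro k hk n
    rw [← ht0 k]; exact ht_mono k hk 0 n (Nat.zero_le n)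
  have htN : ∀ k ∈ Finset.Icc 1 N, t k N = (k:ℝ) * q k := by
    intro k hk
    rw [hkq k hk]
    show ∑ m ∈ Finset.range N, a' m k = ∑ i, a i k
    rw [← Fin.sum_univ_eq_sum_range (fun m => a' m k) N]
    refine Finset.sum_congr rfl (fun i _ => ?_)
    simp [ha'def, i.isLt]
  have hstep : ∀ k (i : Fin N), t k (↑i + 1) = t k ↑i + a i k := by
    intro k i
    show ∑ m ∈ Finset.range (↑i+1), a' m k = ∑ m ∈ Finset.range ↑i, a' m k + a i k
    rw [Finset.sum_range_succ]
    congr 1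
    simp [ha'def, i.isLt]
  set c : ℕ → ℝ := fun k => ∑ k' ∈ Finset.Ico 1 k, q k' with hcdef
  have hcsucc : ∀ k, 1 ≤ k → c (k+1) = c k + q k := by
    intro k hk
    show ∑ k' ∈ Finset.Ico 1 (k+1), q k' = ∑ k' ∈ Finset.Ico 1 k, q k' + q k
    rw [Finset.sum_Ico_succ_top hk]
  have hc0 : ∀ k, k ≤ N + 1 → 0 ≤ c k := by
    intro k hk
    refine Finset.sum_nonneg fun k' hk' => ?_
    rw [Finset.mem_Ico] at hk'
    exact hq0 k' (Finset.mem_Icc.mpr ⟨hk'.1, by omega⟩)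
  have hcmono : ∀ k k', 1 ≤ k → k ≤ k' → k' ≤ N + 1 → c k ≤ c k' := by
    intro k k' h1 h2 h3
    refine Finset.sum_le_sum_of_subset_of_nonneg
      (Finset.Ico_subset_Ico le_rfl h2) (fun m hm _ => ?_)
    rw [Finset.mem_Ico] at hm
    exact hq0 m (Finset.mem_Icc.mpr ⟨hm.1, by omega⟩)
  have hcv : c (N+1) = ∑ k ∈ Finset.Icc 1 N, q k := by
    show ∑ k' ∈ Finset.Ico 1 (N+1), q k' = _
    rw [Finset.Ico_add_one_right_eq_Icc]
  have hvq : ∑ i, ∑ k ∈ Finset.Icc 1 N, a i k / (k:ℝ) = ∑ k ∈ Finset.Icc 1 N, q k := by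
    rw [Finset.sum_comm]
    refine Finset.sum_congr rfl (fun k hk => ?_)
    show ∑ i, a i k / (k:ℝ) = (∑ i, a i k) / (k:ℝ)
    rw [Finset.sum_div]
  have hvle : c (N+1) ≤ 1 := by rw [hcv, ← hvq]; exact hv1
  -- blocks and pieces
  set B : ℕ → Set ℝ := fun k => Set.Ico (c k) (c k + q k) with hBdef
  have hBsub : ∀ k ∈ Finset.Icc 1 N, B k ⊆ Set.Ico (0:ℝ) 1 := by
    intro k hk x hx
    rw [Finset.mem_Icc] at hk
    obtain ⟨hx1, hx2⟩ := hx
    constructor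
    · exact le_trans (hc0 k (by omega)) hx1
    · have h1 : c k + q k = c (k+1) := (hcsucc k hk.1).symm
      have h2 : c (k+1) ≤ c (N+1) := hcmono (k+1) (N+1) (by omega) (by omega) le_rfl
      linarith
  have hBdisj : ∀ k ∈ Finset.Icc 1 N, ∀ k' ∈ Finset.Icc 1 N, ∀ x, x ∈ B k → x ∈ B k' → k = k' := by
    have key : ∀ k ∈ Finset.Icc 1 N, ∀ k' ∈ Finset.Icc 1 N, k < k' → ∀ x, x ∈ B k → x ∉ B k' := by
      intro k hk k' hk' hlt x hx hx'
      rw [Finset.mem_Icc] at hk hk'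
      have h1 : c k + q k = c (k+1) := (hcsucc k hk.1).symm
      have h2 : c (k+1) ≤ c k' := hcmono (k+1) k' (by omega) (by omega) (by omega)
      obtain ⟨_, hx2⟩ := hx
      obtain ⟨hx3, _⟩ := hx'
      linarith
    intro k hk k' hk' x hx hx'
    rcases lt_trichotomy k k' with h | h | h
    · exact absurd hx' (key k hk k' hk' h x hx)
    · exact h
    · exact absurd hx (key k' hk' k hk h x hx')
  set piece : Fin N → ℕ → ℕ → Set ℝ := fun i k m =>
    Set.Ico (c k + t k ↑i - m * q k) (c k + t k (↑i+1) - m * q k) ∩ Set.Ico (c k) (c k + q k)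
    with hpiecedef
  set A : Fin N → Set ℝ := fun i => ⋃ k ∈ Finset.Icc 1 N, ⋃ m ∈ Finset.range k, piece i k m
    with hAdef
  have hAmeas : ∀ i, MeasurableSet (A i) := by
    intro i
    refine Finset.measurableSet_biUnion _ (fun k _ => ?_)
    exact Finset.measurableSet_biUnion _
      (fun m _ => (measurableSet_Ico).inter measurableSet_Ico)
  have hmem : ∀ (i : Fin N) (x : ℝ), x ∈ A i ↔ ∃ k ∈ Finset.Icc 1 N, x ∈ B k ∧
      ∃ m < k, t k ↑i ≤ x - c k + m * q k ∧ x - c k + m * q k < t k (↑i+1) := by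
    intro i x
    rw [hAdef]
    simp only [Set.mem_iUnion, hpiecedef, Set.mem_inter_iff, Set.mem_Ico, Finset.mem_range,
      exists_prop, hBdef]
    constructor
    · rintro ⟨k, hk, m, hm, ⟨h1, h2⟩, h3⟩
      exact ⟨k, hk, h3, m, hm, by linarith, by linarith⟩
    · rintro ⟨k, hk, h3, m, hm, h1, h2⟩
      exact ⟨k, hk, m, hm, ⟨by linarith, by linarith⟩, h3⟩
  -- the counting lemma
  have hcount : ∀ k ∈ Finset.Icc 1 N, ∀ x ∈ B k,
      (Finset.univ.filter fun i => x ∈ A i).card = k := by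
    intro k hk x hx
    have hkIcc := hk
    rw [Finset.mem_Icc] at hk
    obtain ⟨hx1, hx2⟩ := hx
    have hqpos : 0 < q k := by linarith
    set y := x - c k with hydef
    have hy0 : 0 ≤ y := by rw [hydef]; linarith
    have hyq : y < q k := by rw [hydef]; linarith
    -- membership in A i simplifies to block k
    have hmem' : ∀ i : Fin N, x ∈ A i ↔
        ∃ m < k, t k ↑i ≤ y + m * q k ∧ y + m * q k < t k (↑i+1) := by
      intro i
      rw [hmem i x]
      constructor
      · rintro ⟨k', hk', hxB', m, hm, h1, h2⟩
        have : k = k' := hBdisj k hkIcc k' hk' x ⟨hx1, hx2⟩ hxB'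
        subst this
        exact ⟨m, hm, h1, h2⟩
      · rintro ⟨m, hm, h1, h2⟩
        exact ⟨k, hkIcc, ⟨hx1, hx2⟩, m, hm, h1, h2⟩
    -- unique index for each z in [0, k q)
    have huniq : ∀ (z : ℝ) (i i' : Fin N),
        t k ↑i ≤ z → z < t k (↑i+1) → t k ↑i' ≤ z → z < t k (↑i'+1) → i = i' := by
      intro z i i' h1 h2 h3 h4
      by_contra hne
      rcases lt_or_gt_of_ne (fun h : (i:ℕ) = (i':ℕ) => hne (Fin.ext h)) with h | h
      · have := ht_mono k hkIcc (↑i+1) ↑i' h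
        linarith
      · have := ht_mono k hkIcc (↑i'+1) ↑i h
        linarith
    -- choice function
    have hex : ∀ m : ℕ, ∃ i : Fin N,
        m < k → t k ↑i ≤ y + m * q k ∧ y + m * q k < t k (↑i+1) := by
      intro m
      by_cases hm : m < k
      · have hz0 : t k 0 ≤ y + m * q k := by
          rw [ht0]
          have : (0:ℝ) ≤ m * q k := mul_nonneg (Nat.cast_nonneg m) hqpos.le
          linarith
        have hzN : y + m * q k < t k N := by
          rw [htN k hkIcc]
          have hm1 : (m:ℝ) + 1 ≤ k := by exact_mod_cast hm
          nlinarith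
        obtain ⟨i', hi', h1, h2⟩ := exists_step (t k) N (y + m * q k) hz0 hzN
        exact ⟨⟨i', hi'⟩, fun _ => ⟨h1, h2⟩⟩
      · exact ⟨⟨0, by omega⟩, fun h => absurd h hm⟩
    choose F hF using hex
    have hfilter : Finset.univ.filter (fun i => x ∈ A i)
        = Finset.image F (Finset.range k) := by
      ext i
      rw [Finset.mem_filter, Finset.mem_image]
      constructor
      · rintro ⟨-, hxa⟩
        obtain ⟨m, hm, h1, h2⟩ := (hmem' i).mp hxa
        obtain ⟨h3, h4⟩ := hF m hm
        exact ⟨m, Finset.mem_range.mpr hm, (huniq (y + m * q k) (F m) i h3 h4 h1 h2)⟩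
      · rintro ⟨m, hm, rfl⟩
        rw [Finset.mem_range] at hm
        obtain ⟨h1, h2⟩ := hF m hm
        exact ⟨Finset.mem_univ _, (hmem' (F m)).mpr ⟨m, hm, h1, h2⟩⟩
    rw [hfilter, Finset.card_image_of_injOn, Finset.card_range]
    intro m hm m' hm' heq
    rw [Finset.mem_coe, Finset.mem_range] at hm hm'
    obtain ⟨h1, h2⟩ := hF m hm
    obtain ⟨h3, h4⟩ := hF m' hm'
    rw [heq] at h1 h2
    set i := F m' with hidef
    have hlen : t k (↑i+1) = t k ↑i + a i k := hstep k i
    have hle : a i k ≤ q k := haq i k hkIcc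
    by_contra hne
    rcases Nat.lt_or_ge m m' with h | h
    · have : (m:ℝ) + 1 ≤ m' := by exact_mod_cast h
      nlinarith
    · have h' : m' < m := by omega
      have : (m':ℝ) + 1 ≤ m := by exact_mod_cast h'
      nlinarith
  -- piece measures
  have hpiece_meas : ∀ (i : Fin N) k m, MeasurableSet (piece i k m) :=
    fun i k m => measurableSet_Ico.inter measurableSet_Ico
  have hofReal_max : ∀ x : ℝ, ENNReal.ofReal x = ENNReal.ofReal (max 0 x) := by
    intro x
    rcases le_or_gt 0 x with h | h
    · rw [max_eq_right h]
    · rw [max_eq_left h.le, ENNReal.ofReal_of_nonpos h.le, ENNReal.ofReal_zero]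
  have hpiecevol : ∀ (i : Fin N) (k m : ℕ), volume (piece i k m)
      = ENNReal.ofReal (max 0 (min (t k (↑i+1)) ((m+1) * q k) - max (t k ↑i) (m * q k))) := by
    intro i k m
    show volume (Set.Ico (c k + t k ↑i - m * q k) (c k + t k (↑i+1) - m * q k)
      ∩ Set.Ico (c k) (c k + q k)) = _
    rw [Set.Ico_inter_Ico, Real.volume_Ico, ← hofReal_max]
    congr 1
    have e1 : max (c k + t k ↑i - ↑m * q k) (c k)
        = max (t k ↑i) (↑m * q k) + (c k - ↑m * q k) := by
      rw [← max_add_add_right]; congr 1 <;> ring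
    have e2 : min (c k + t k (↑i+1) - ↑m * q k) (c k + q k)
        = min (t k (↑i+1)) ((↑m+1) * q k) + (c k - ↑m * q k) := by
      rw [← min_add_add_right]; congr 1 <;> ring
    rw [e1, e2]
    ring
  have hmempiece : ∀ (i : Fin N) (k m : ℕ) (x : ℝ), x ∈ piece i k m ↔
      (t k ↑i ≤ x - c k + m * q k ∧ x - c k + m * q k < t k (↑i+1))
      ∧ (c k ≤ x ∧ x < c k + q k) := by
    intro i k m x
    show x ∈ Set.Ico _ _ ∩ Set.Ico _ _ ↔ _
    simp only [Set.mem_inter_iff, Set.mem_Ico]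
    constructor
    · rintro ⟨⟨h1, h2⟩, h3⟩; exact ⟨⟨by linarith, by linarith⟩, h3⟩
    · rintro ⟨⟨h1, h2⟩, h3⟩; exact ⟨⟨by linarith, by linarith⟩, h3⟩
  have hpdisj : ∀ (i : Fin N), ∀ k ∈ Finset.Icc 1 N,
      Set.PairwiseDisjoint ↑(Finset.range k) (piece i k) := by
    intro i k hk
    have key : ∀ m m' : ℕ, m < m' → ∀ x, x ∈ piece i k m → x ∉ piece i k m' := by
      intro m m' hlt x hx hx'
      rw [hmempiece] at hx hx'
      obtain ⟨⟨h1, h2⟩, ⟨h3, h4⟩⟩ := hx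
      obtain ⟨⟨h5, h6⟩, -⟩ := hx'
      have hq0k : 0 ≤ q k := hq0 k hk
      have hlen : t k (↑i+1) = t k ↑i + a i k := hstep k i
      have hle : a i k ≤ q k := haq i k hk
      have hm1 : (m:ℝ) + 1 ≤ m' := by exact_mod_cast hlt
      have h7 : q k ≤ (m':ℝ) * q k - m * q k := by nlinarith
      linarith
    intro m _ m' _ hne
    apply Set.disjoint_left.mpr
    intro x hx hx'
    rcases Nat.lt_or_ge m m' with h | h
    · exact key m m' h x hx hx'
    · exact key m' m (by omega) x hx' hx
  have hAiB : ∀ (i : Fin N), ∀ k ∈ Finset.Icc 1 N,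
      A i ∩ B k = ⋃ m ∈ Finset.range k, piece i k m := by
    intro i k hk
    ext x
    simp only [Set.mem_inter_iff, Set.mem_iUnion, Finset.mem_range, exists_prop]
    constructor
    · rintro ⟨hxa, hxb⟩
      obtain ⟨k', hk', hxb', m, hm, h1, h2⟩ := (hmem i x).mp hxa
      have hkk : k = k' := hBdisj k hk k' hk' x hxb hxb'
      subst hkk
      refine ⟨m, hm, (hmempiece i k m x).mpr ⟨⟨h1, h2⟩, Set.mem_Ico.mp hxb⟩⟩
    · rintro ⟨m, hm, hx⟩
      rw [hmempiece] at hx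
      exact ⟨(hmem i x).mpr ⟨k, hk, Set.mem_Ico.mpr hx.2, m, hm, hx.1.1, hx.1.2⟩,
        Set.mem_Ico.mpr hx.2⟩
  have hkey : ∀ (i : Fin N), ∀ k ∈ Finset.Icc 1 N,
      volume (A i ∩ B k) = ENNReal.ofReal (a i k) := by
    intro i k hk
    rw [hAiB i k hk, measure_biUnion_finset (hpdisj i k hk) (fun m _ => hpiece_meas i k m)]
    rw [Finset.sum_congr rfl (fun m _ => hpiecevol i k m),
      ← ENNReal.ofReal_sum_of_nonneg (fun m _ => le_max_left 0 _)]
    congr 1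
    have hi1 : (↑i + 1 : ℕ) ≤ N := i.isLt
    rw [sum_chunks k (t k ↑i) (t k (↑i+1)) (q k) (hq0 k hk) (ht_nonneg k hk ↑i)
      (ht_mono k hk ↑i (↑i+1) (by omega))
      (by rw [← htN k hk]; exact ht_mono k hk (↑i+1) N hi1)]
    rw [hstep k i]; ring
  -- the probability space
  set P : Measure ℝ := volume.restrict (Set.Ico (0:ℝ) 1) with hPdef
  have hP : ∀ X : Set ℝ, P X = volume (X ∩ Set.Ico 0 1) :=
    fun X => Measure.restrict_apply' measurableSet_Ico
  have hPsub : ∀ X : Set ℝ, X ⊆ Set.Ico (0:ℝ) 1 → P X = volume X := by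
    intro X hX
    rw [hP, Set.inter_eq_self_of_subset_left hX]
  have hProb : IsProbabilityMeasure P := by
    constructor
    rw [hP, Set.univ_inter, Real.volume_Ico]
    simp
  have hPfin : ∀ X : Set ℝ, P X ≠ ⊤ := by
    intro X
    rw [hP]
    exact ne_top_of_le_ne_top (by rw [Real.volume_Ico]; exact ENNReal.ofReal_ne_top)
      (measure_mono Set.inter_subset_right)
  have hAsubB : ∀ i : Fin N, A i ⊆ ⋃ k ∈ Finset.Icc 1 N, B k := by
    intro i x hx
    obtain ⟨k, hk, hxb, -⟩ := (hmem i x).mp hx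
    exact Set.mem_biUnion hk hxb
  have hBsubIco : (⋃ k ∈ Finset.Icc 1 N, B k) ⊆ Set.Ico (0:ℝ) 1 := by
    intro x hx
    obtain ⟨k, hk, hxb⟩ := Set.mem_iUnion₂.mp hx
    exact hBsub k hk hxb
  have hUB : (⋃ i, A i) = ⋃ k ∈ Finset.Icc 1 N, B k := by
    ext x
    constructor
    · intro hx
      obtain ⟨i, hi⟩ := Set.mem_iUnion.mp hx
      exact hAsubB i hi
    · intro hx
      obtain ⟨k, hk, hxb⟩ := Set.mem_iUnion₂.mp hx
      have hcard := hcount k hk x hxb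
      have hk1 : 1 ≤ k := (Finset.mem_Icc.mp hk).1
      have : (Finset.univ.filter fun i => x ∈ A i).Nonempty := by
        rw [← Finset.card_pos, hcard]; omega
      obtain ⟨i, hi⟩ := this
      exact Set.mem_iUnion.mpr ⟨i, (Finset.mem_filter.mp hi).2⟩
  have hBmeas : ∀ k, MeasurableSet (B k) := fun k => measurableSet_Ico
  have hpart : ∀ X : Set ℝ, MeasurableSet X → X ⊆ (⋃ k ∈ Finset.Icc 1 N, B k) →
      P X = ∑ k ∈ Finset.Icc 1 N, P (X ∩ B k) := by
    intro X hXm hXs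
    have hXeq : X = ⋃ k ∈ Finset.Icc 1 N, X ∩ B k := by
      ext x
      constructor
      · intro hx
        obtain ⟨k, hk, hxb⟩ := Set.mem_iUnion₂.mp (hXs hx)
        exact Set.mem_biUnion hk ⟨hx, hxb⟩
      · intro hx
        obtain ⟨k, hk, hxb, -⟩ := Set.mem_iUnion₂.mp hx
        exact hxb
    have hdisj : Set.PairwiseDisjoint ↑(Finset.Icc 1 N) (fun k => X ∩ B k) := by
      intro k hk k' hk' hne
      apply Set.disjoint_left.mpr
      rintro x ⟨-, hx⟩ ⟨-, hx'⟩
      exact hne (hBdisj k hk k' hk' x hx hx')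
    rw [← measure_biUnion_finset hdisj (fun k _ => hXm.inter (hBmeas k))]
    exact congrArg P hXeq
  have hkeyP : ∀ (i : Fin N), ∀ k ∈ Finset.Icc 1 N,
      P (A i ∩ B k) = ENNReal.ofReal (a i k) := by
    intro i k hk
    rw [hPsub _ (fun x hx => hBsub k hk hx.2), hkey i k hk]
  have hBvolP : ∀ k ∈ Finset.Icc 1 N, P (B k) = ENNReal.ofReal (q k) := by
    intro k hk
    rw [hPsub _ (hBsub k hk)]
    show volume (Set.Ico (c k) (c k + q k)) = _
    rw [Real.volume_Ico]
    congr 1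
    ring
  clear hmem hmempiece hpiecevol hpdisj hAiB hkey hP hpiecedef hAdef hBdef htdef hcdef
    hqdef ha'def hPdef hofReal_max hpiece_meas ht0 ht_mono ht_nonneg htN hstep hcsucc
    hc0 hcmono hcv hvle hkq haq ha'0 hcon hv1 hPsub hBsubIco
  clear_value A piece B P t c a' q
  refine ⟨ℝ, inferInstance, P, hProb, A, hAmeas, ?_, ?_, ?_⟩
  · intro i
    rw [hpart (A i) (hAmeas i) (hAsubB i), Finset.sum_congr rfl (hkeyP i),
      ENNReal.toReal_sum (fun k _ => ENNReal.ofReal_ne_top)]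
    exact Finset.sum_congr rfl (fun k hk => ENNReal.toReal_ofReal (h0 i k hk))
  · intro i
    have h1 : ∀ j, (P (A i ∩ A j)).toReal
        = ∑ k ∈ Finset.Icc 1 N, (P ((A i ∩ B k) ∩ A j)).toReal := by
      intro j
      have e : ∀ k : ℕ, (A i ∩ B k) ∩ A j = (A i ∩ A j) ∩ B k := by
        intro k; ext x; simp only [Set.mem_inter_iff]; tauto
      simp_rw [e]
      rw [← ENNReal.toReal_sum (fun k _ => hPfin _),
        ← hpart _ ((hAmeas i).inter (hAmeas j)) (fun x hx => hAsubB i hx.1)]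
    simp_rw [h1]
    rw [Finset.sum_comm]
    refine Finset.sum_congr rfl (fun k hk => ?_)
    have h2 : ∑ j, P ((A i ∩ B k) ∩ A j) = k * P (A i ∩ B k) :=
      count_sum P A hAmeas ((hAmeas i).inter (hBmeas k)) (fun x hx => hcount k hk x hx.2)
    rw [← ENNReal.toReal_sum (fun j _ => hPfin _), h2, hkeyP i k hk, ENNReal.toReal_mul,
      ENNReal.toReal_ofReal (h0 i k hk)]
    simp
  · rw [hvq, hUB, hpart _ (Finset.measurableSet_biUnion _ (fun k _ => hBmeas k)) le_rfl]
    have h3 : ∀ k ∈ Finset.Icc 1 N, P ((⋃ k ∈ Finset.Icc 1 N, B k) ∩ B k)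
        = ENNReal.ofReal (q k) := by
      intro k hk
      have e : (⋃ k' ∈ Finset.Icc 1 N, B k') ∩ B k = B k :=
        Set.inter_eq_self_of_subset_right (fun x hx => Set.mem_biUnion hk hx)
      rw [e, hBvolP k hk]
    rw [Finset.sum_congr rfl h3, ENNReal.toReal_sum (fun k _ => ENNReal.ofReal_ne_top)]
    exact Finset.sum_congr rfl (fun k hk => ENNReal.toReal_ofReal (hq0 k hk))

/-- The optimal numerical lower bound: the infimum of `P(⋃ i, A i)` over all probability
spaces and events consistent with the given `α i = P(A i)` and
`γ i = ∑ j, P(A i ∩ A j)` equals the value of the LP of Theorem 1. -/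
theorem optimal_numerical_lower_bound (N : ℕ) (hN : 1 ≤ N) (α γ : Fin N → ℝ)
    (hfeas : ∃ (Ω : Type) (_ : MeasurableSpace Ω) (P : Measure Ω)
      (_ : IsProbabilityMeasure P) (A : Fin N → Set Ω),
      (∀ i, MeasurableSet (A i)) ∧ (∀ i, (P (A i)).toReal = α i) ∧
      (∀ i, ∑ j : Fin N, (P (A i ∩ A j)).toReal = γ i)) :
    sInf {v : ℝ | ∃ (Ω : Type) (_ : MeasurableSpace Ω) (P : Measure Ω)
        (_ : IsProbabilityMeasure P) (A : Fin N → Set Ω),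
        (∀ i, MeasurableSet (A i)) ∧ (∀ i, (P (A i)).toReal = α i) ∧
        (∀ i, ∑ j : Fin N, (P (A i ∩ A j)).toReal = γ i) ∧
        v = (P (⋃ i, A i)).toReal} =
    sInf {v : ℝ | ∃ a : Fin N → ℕ → ℝ,
        (∀ i : Fin N, ∀ k ∈ Finset.Icc 1 N, 0 ≤ a i k) ∧
        (∀ i : Fin N, ∑ k ∈ Finset.Icc 1 N, a i k = α i) ∧
        (∀ i : Fin N, ∑ k ∈ Finset.Icc 1 N, (k : ℝ) * a i k = γ i) ∧
        (∀ j : Fin N, ∀ k ∈ Finset.Icc 1 N, ∑ i : Fin N, a i k ≥ (k : ℝ) * a j k) ∧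
        v = ∑ i : Fin N, ∑ k ∈ Finset.Icc 1 N, a i k / (k : ℝ)} := by
  set L := {v : ℝ | ∃ (Ω : Type) (_ : MeasurableSpace Ω) (P : Measure Ω)
      (_ : IsProbabilityMeasure P) (A : Fin N → Set Ω),
      (∀ i, MeasurableSet (A i)) ∧ (∀ i, (P (A i)).toReal = α i) ∧
      (∀ i, ∑ j : Fin N, (P (A i ∩ A j)).toReal = γ i) ∧
      v = (P (⋃ i, A i)).toReal} with hLdef
  set R := {v : ℝ | ∃ a : Fin N → ℕ → ℝ,
      (∀ i : Fin N, ∀ k ∈ Finset.Icc 1 N, 0 ≤ a i k) ∧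
      (∀ i : Fin N, ∑ k ∈ Finset.Icc 1 N, a i k = α i) ∧
      (∀ i : Fin N, ∑ k ∈ Finset.Icc 1 N, (k : ℝ) * a i k = γ i) ∧
      (∀ j : Fin N, ∀ k ∈ Finset.Icc 1 N, ∑ i : Fin N, a i k ≥ (k : ℝ) * a j k) ∧
      v = ∑ i : Fin N, ∑ k ∈ Finset.Icc 1 N, a i k / (k : ℝ)} with hRdef
  obtain ⟨Ω, m, P, hProb, A, hA, hα, hγ⟩ := hfeas
  have hLmem : (P (⋃ i, A i)).toReal ∈ L :=
    ⟨Ω, m, P, hProb, A, hA, hα, hγ, rfl⟩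
  have hLne : L.Nonempty := ⟨_, hLmem⟩
  have hLsubR : L ⊆ R := by
    rintro v ⟨Ω', m', P', hProb', A', hA', hα', hγ', hveq⟩
    haveI := hProb'
    obtain ⟨a, h1, h2, h3, h4, h5⟩ := measure_to_LP P' A' hA'
    refine ⟨a, h1, ?_, ?_, h4, ?_⟩
    · intro i; rw [h2 i, hα' i]
    · intro i; rw [h3 i]; exact hγ' i
    · rw [hveq, h5]
  have hRne : R.Nonempty := ⟨_, hLsubR hLmem⟩
  have hLbdd : BddBelow L := by
    refine ⟨0, fun v hv => ?_⟩
    obtain ⟨_, _, _, _, _, _, _, _, hveq⟩ := hv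
    rw [hveq]
    exact ENNReal.toReal_nonneg
  have hRbdd : BddBelow R := by
    refine ⟨0, fun v hv => ?_⟩
    obtain ⟨a, h1, -, -, -, h5⟩ := hv
    rw [h5]
    exact Finset.sum_nonneg fun i _ => Finset.sum_nonneg fun k hk =>
      div_nonneg (h1 i k hk) (Nat.cast_nonneg k)
  refine le_antisymm ?_ (csInf_le_csInf hRbdd hLne hLsubR)
  refine le_csInf hRne ?_
  rintro v ⟨a, h1, h2, h3, h4, h5⟩
  rcases le_or_gt v 1 with hvle | hvgt
  · have hv1 : ∑ i, ∑ k ∈ Finset.Icc 1 N, a i k / (k:ℝ) ≤ 1 := by rw [← h5]; exact hvle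
    obtain ⟨Ω', m', P', hProb', A', hA', hα', hγ', hu'⟩ := LP_to_measure hN a h1 h4 hv1
    refine csInf_le hLbdd ⟨Ω', m', P', hProb', A', hA', ?_, ?_, ?_⟩
    · intro i; rw [hα' i, h2 i]
    · intro i; rw [hγ' i, h3 i]
    · rw [h5, ← hu']
  · refine le_trans (csInf_le hLbdd hLmem) ?_
    haveI := hProb
    have hle1 : (P (⋃ i, A i)).toReal ≤ 1 := by
      have h := prob_le_one (μ := P) (s := ⋃ i, A i)
      calc (P (⋃ i, A i)).toReal ≤ (1 : ENNReal).toReal :=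
            ENNReal.toReal_mono ENNReal.one_ne_top h
        _ = 1 := by simp
    linarith
end

section
/- (Value of the single-index KAT linear program) Let N ≥ 1 and let α, γ be real numbers with α > 0 and α ≤ γ ≤ N·α. Then the minimum of Σ_{k=1}^N x_k/k over all (x_1,…,x_N) with x_k ≥ 0 for all k, Σ_{k=1}^N x_k = α, and Σ_{k=1}^N k·x_k = γ, is attained and equals [ 1/⌊γ/α⌋ − (γ/α − ⌊γ/α⌋)/((1 + ⌊γ/α⌋)·⌊γ/α⌋) ] · α. -/
/-- Value of the single-index KAT linear program: the minimum of `∑ k, x k / k` subject to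
`x k ≥ 0`, `∑ k, x k = α`, `∑ k, k * x k = γ` (with `k` ranging over `1,…,N`, here encoded
as `k = i + 1` for `i : Fin N`) is attained and equals the KAT expression. -/
theorem kat_lp_value (N : ℕ) (hN : 1 ≤ N) (α γ : ℝ)
    (hα : 0 < α) (h1 : α ≤ γ) (h2 : γ ≤ (N : ℝ) * α) :
    IsLeast {v : ℝ | ∃ x : Fin N → ℝ, (∀ k, 0 ≤ x k) ∧
        (∑ k : Fin N, x k = α) ∧
        (∑ k : Fin N, (((k : ℕ) : ℝ) + 1) * x k = γ) ∧
        v = ∑ k : Fin N, x k / (((k : ℕ) : ℝ) + 1)}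
      ((1 / (⌊γ / α⌋ : ℝ) -
        (γ / α - (⌊γ / α⌋ : ℝ)) / ((1 + (⌊γ / α⌋ : ℝ)) * (⌊γ / α⌋ : ℝ))) * α) := by
  set t := γ / α with ht
  have ht1 : (1:ℝ) ≤ t := (one_le_div hα).mpr h1
  have htN : t ≤ N := (div_le_iff₀ hα).mpr (by linarith)
  set m : ℤ := ⌊t⌋ with hm
  have hm1 : (1:ℤ) ≤ m := Int.le_floor.mpr (by exact_mod_cast ht1)
  have hmt : (m:ℝ) ≤ t := Int.floor_le t
  have htm : t < m + 1 := Int.lt_floor_add_one t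
  have hmNr : (m:ℝ) ≤ (N:ℝ) := le_trans hmt htN
  set M : ℕ := m.toNat with hM
  have hMm : (M:ℤ) = m := Int.toNat_of_nonneg (by linarith)
  have hMr : (M:ℝ) = (m:ℝ) := by exact_mod_cast hMm
  have hM1 : 1 ≤ M := by omega
  have hMN : M ≤ N := by
    have : (M:ℝ) ≤ (N:ℝ) := by rw [hMr]; exact hmNr
    exact_mod_cast this
  have hMr1 : (1:ℝ) ≤ (M:ℝ) := by exact_mod_cast hM1
  have hMpos : (0:ℝ) < M := by linarith
  have hMne : (M:ℝ) ≠ 0 := ne_of_gt hMpos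
  have hM1ne : (M:ℝ) + 1 ≠ 0 := by linarith
  have hγ : γ = t * α := by rw [ht, div_mul_cancel₀ _ hα.ne']
  rw [← hMr]
  have hMt : (M:ℝ) ≤ t := by rw [hMr]; exact hmt
  have htM : t < (M:ℝ) + 1 := by rw [hMr]; exact htm
  constructor
  · -- membership : explicit optimal solution
    set A : ℝ := ((M:ℝ) + 1 - t) * α with hA
    set B : ℝ := (t - (M:ℝ)) * α with hB
    have hA0 : 0 ≤ A := mul_nonneg (by linarith) hα.le
    have hB0 : 0 ≤ B := mul_nonneg (by linarith) hα.le
    have hM1N : M - 1 < N := by omega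
    have key : ∀ g : ℕ → ℝ,
        ∑ k : Fin N, g (k:ℕ) * ((if (k:ℕ) = M - 1 then A else 0)
          + (if (k:ℕ) = M then B else 0))
        = g (M-1) * A + (if M < N then g M * B else 0) := by
      intro g
      rw [Fin.sum_univ_eq_sum_range (fun i => g i * ((if i = M - 1 then A else 0)
          + (if i = M then B else 0)))]
      simp only [mul_add, mul_ite, mul_zero, Finset.sum_add_distrib,
        Finset.sum_ite_eq', Finset.mem_range, hM1N, if_true]
    have hMc : ((M-1 : ℕ) : ℝ) = (M:ℝ) - 1 := by
      rw [Nat.cast_sub hM1]; simp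
    refine ⟨fun k => (if (k:ℕ) = M - 1 then A else 0) + (if (k:ℕ) = M then B else 0),
      fun k => add_nonneg (by split <;> simp [hA0]) (by split <;> simp [hB0]), ?_, ?_, ?_⟩
    · have h := key (fun _ => 1)
      simp only [one_mul] at h
      rw [h]
      rcases lt_or_eq_of_le hMN with hlt | heq
      · rw [if_pos hlt, hA, hB]; ring
      · rw [if_neg (by omega)]
        have htn : t = (M:ℝ) := by
          have : (N:ℝ) = (M:ℝ) := by exact_mod_cast heq.symm
          linarith [htN, hMt, this]
        rw [hA, htn]; ring
    · have h := key (fun n => (n:ℝ) + 1)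
      rw [h, hMc]
      rcases lt_or_eq_of_le hMN with hlt | heq
      · rw [if_pos hlt, hA, hB, hγ]; push_cast; ring
      · rw [if_neg (by omega)]
        have htn : t = (M:ℝ) := by
          have : (N:ℝ) = (M:ℝ) := by exact_mod_cast heq.symm
          linarith [htN, hMt, this]
        rw [hA, htn, hγ, htn]; ring
    · have h := key (fun n => (((n:ℕ):ℝ) + 1)⁻¹)
      have hrw : ∀ k : Fin N,
          ((if (k:ℕ) = M - 1 then A else 0) + (if (k:ℕ) = M then B else 0)) / (((k:ℕ):ℝ) + 1)
          = (((k:ℕ):ℝ) + 1)⁻¹ * ((if (k:ℕ) = M - 1 then A else 0) + (if (k:ℕ) = M then B else 0)) := by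
        intro k; rw [div_eq_inv_mul]
      rw [Finset.sum_congr rfl (fun k _ => hrw k), h, hMc]
      have hMm1 : (M:ℝ) - 1 + 1 = (M:ℝ) := by ring
      rw [hMm1]
      rcases lt_or_eq_of_le hMN with hlt | heq
      · rw [if_pos hlt, hA, hB]
        field_simp
        ring
      · rw [if_neg (by omega)]
        have htn : t = (M:ℝ) := by
          have : (N:ℝ) = (M:ℝ) := by exact_mod_cast heq.symm
          linarith [htN, hMt, this]
        rw [hA, htn]
        field_simp
        ring
  · -- lower bound
    rintro v ⟨x, hx0, hxs, hxk, hv⟩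
    have hlam : ∀ k : Fin N,
        (1/(M:ℝ) + 1/((M:ℝ)+1) - (((k:ℕ):ℝ)+1)/((M:ℝ)*((M:ℝ)+1))) * x k
          ≤ x k / (((k:ℕ):ℝ)+1) := by
      intro k
      set K : ℝ := ((k:ℕ):ℝ) + 1 with hK
      have hKpos : (0:ℝ) < K := by positivity
      have hcoef : 1/(M:ℝ) + 1/((M:ℝ)+1) - K/((M:ℝ)*((M:ℝ)+1)) ≤ 1/K := by
        have hfact : 1/K - (1/(M:ℝ) + 1/((M:ℝ)+1) - K/((M:ℝ)*((M:ℝ)+1)))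
            = (K - (M:ℝ)) * (K - (M:ℝ) - 1) / (K * ((M:ℝ) * ((M:ℝ)+1))) := by
          field_simp
          ring
        have hnum : 0 ≤ (K - (M:ℝ)) * (K - (M:ℝ) - 1) := by
          rcases le_or_gt ((k:ℕ) + 1) M with hle | hlt
          · have : K ≤ (M:ℝ) := by rw [hK]; exact_mod_cast hle
            nlinarith
          · have : (M:ℝ) + 1 ≤ K := by rw [hK]; exact_mod_cast hlt
            exact mul_nonneg (by linarith) (by linarith)
        have : 0 ≤ (K - (M:ℝ)) * (K - (M:ℝ) - 1) / (K * ((M:ℝ) * ((M:ℝ)+1))) :=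
          div_nonneg hnum (by positivity)
        linarith [hfact ▸ this]
      have h2' : x k / K = (1/K) * x k := by ring
      rw [h2']
      exact mul_le_mul_of_nonneg_right hcoef (hx0 k)
    calc (1 / (M:ℝ) - (t - (M:ℝ)) / ((1 + (M:ℝ)) * (M:ℝ))) * α
        = (1/(M:ℝ) + 1/((M:ℝ)+1)) * α - γ / ((M:ℝ)*((M:ℝ)+1)) := by
          rw [hγ]; field_simp; ring
      _ = ∑ k : Fin N,
            (1/(M:ℝ) + 1/((M:ℝ)+1) - (((k:ℕ):ℝ)+1)/((M:ℝ)*((M:ℝ)+1))) * x k := by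
          simp only [sub_mul]
          rw [Finset.sum_sub_distrib, ← Finset.mul_sum, hxs]
          have : ∑ k : Fin N, (((k:ℕ):ℝ)+1)/((M:ℝ)*((M:ℝ)+1)) * x k
              = γ / ((M:ℝ)*((M:ℝ)+1)) := by
            rw [← hxk, Finset.sum_div]
            exact Finset.sum_congr rfl (fun k _ => by ring)
          rw [this]
      _ ≤ ∑ k : Fin N, x k / (((k:ℕ):ℝ)+1) :=
          Finset.sum_le_sum (fun k _ => hlam k)
      _ = v := hv.symm
end

section
/- (Uniqueness of the KAT LP optimum) Let N ≥ 1 and let α, γ be real numbers with α > 0 and α ≤ γ ≤ N·α. Consider the feasible set F of all (x_1,…,x_N) with x_k ≥ 0 for all k, Σ_{k=1}^N x_k = α, and Σ_{k=1}^N k·x_k = γ. If x ∈ F and y ∈ F both minimize Σ_{k=1}^N x_k/k over F, then x = y. -/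
open Finset

lemma sum_two_aux {N : ℕ} (a b : Fin N) (hab : a ≠ b) (f : Fin N → ℝ) (p q : ℝ) :
    ∑ k : Fin N, f k * (if k = a then p else if k = b then q else 0) = f a * p + f b * q := by
  have h : ∀ k : Fin N, f k * (if k = a then p else if k = b then q else 0)
      = (if k = a then f a * p else 0) + (if k = b then f b * q else 0) := by
    intro k
    rcases eq_or_ne k a with rfl | hka
    · simp [hab]
    · rcases eq_or_ne k b with rfl | hkb
      · simp [hka]
      · simp [hka, hkb]
  simp_rw [h, Finset.sum_add_distrib, Finset.sum_ite_eq']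
  simp

lemma kat_aux (N : ℕ) (α γ : ℝ) (d : ℕ) (hd1 : 1 ≤ d) (hdN : d < N)
    (hdl : (d : ℝ) * α ≤ γ) (hdu : γ ≤ ((d : ℝ) + 1) * α)
    (z : Fin N → ℝ) (hz0 : ∀ k, 0 ≤ z k) (hz1 : ∑ k : Fin N, z k = α)
    (hz2 : ∑ k : Fin N, (((k : ℕ) : ℝ) + 1) * z k = γ)
    (hzopt : ∑ k : Fin N, z k / (((k : ℕ) : ℝ) + 1)
      ≤ (((d : ℝ) + 1) * α - γ) / d + (γ - (d : ℝ) * α) / ((d : ℝ) + 1)) :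
    z = fun k : Fin N => if (k : ℕ) + 1 = d then ((d : ℝ) + 1) * α - γ
      else if (k : ℕ) + 1 = d + 1 then γ - (d : ℝ) * α else 0 := by
  have hd0 : (0 : ℝ) < d := by exact_mod_cast hd1
  set a : Fin N := ⟨d - 1, by omega⟩ with ha
  set b : Fin N := ⟨d, hdN⟩ with hb
  have hav : (a : ℕ) = d - 1 := rfl
  have hbv : (b : ℕ) = d := rfl
  have hab : a ≠ b := by
    intro h
    have := congrArg Fin.val h
    rw [hav, hbv] at this
    omega
  -- the "dual slack" B k
  set B : Fin N → ℝ := fun k => 1 / (((k : ℕ) : ℝ) + 1)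
      - (2 * (d : ℝ) + 1 - (((k : ℕ) : ℝ) + 1)) / ((d : ℝ) * ((d : ℝ) + 1)) with hBdef
  have hBfact : ∀ k : Fin N, B k = ((((k : ℕ) : ℝ) + 1 - d) * ((((k : ℕ) : ℝ) + 1 - d) - 1))
      / (((((k : ℕ) : ℝ) + 1)) * ((d : ℝ) * ((d : ℝ) + 1))) := by
    intro k
    have ht : (0 : ℝ) < ((k : ℕ) : ℝ) + 1 := by positivity
    simp only [hBdef]
    field_simp
    ring
  have hBnonneg : ∀ k : Fin N, 0 ≤ B k := by
    intro k
    rw [hBfact]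
    apply div_nonneg _ (by positivity)
    rcases le_or_gt ((k : ℕ) + 1) d with h | h
    · have h1 : (((k : ℕ) : ℝ) + 1) - d ≤ 0 := by
        have : (((k : ℕ) : ℝ) + 1) ≤ d := by exact_mod_cast h
        linarith
      nlinarith
    · have h1 : (1 : ℝ) ≤ (((k : ℕ) : ℝ) + 1) - d := by
        have : (d : ℝ) + 1 ≤ ((k : ℕ) : ℝ) + 1 := by exact_mod_cast h
        linarith
      nlinarith
  have hBpos : ∀ k : Fin N, (k : ℕ) + 1 ≠ d → (k : ℕ) + 1 ≠ d + 1 → 0 < B k := by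
    intro k hk1 hk2
    rw [hBfact]
    apply div_pos _ (by positivity)
    rcases lt_or_gt_of_ne hk1 with h | h
    · have h1 : (((k : ℕ) : ℝ) + 1) - d ≤ -1 := by
        have : (((k : ℕ) : ℝ) + 1) + 1 ≤ d := by exact_mod_cast h
        linarith
      nlinarith
    · have h' : d + 2 ≤ (k : ℕ) + 1 := by omega
      have h1 : (2 : ℝ) ≤ (((k : ℕ) : ℝ) + 1) - d := by
        have : (d : ℝ) + 2 ≤ ((k : ℕ) : ℝ) + 1 := by exact_mod_cast h'
        linarith
      nlinarith
  -- the total slack is ≤ 0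
  have hsum : ∑ k : Fin N, z k * B k ≤ 0 := by
    have hcongr : ∀ k ∈ Finset.univ, z k * B k
        = z k / (((k : ℕ) : ℝ) + 1)
          - ((2 * (d : ℝ) + 1) * z k - ((((k : ℕ) : ℝ) + 1) * z k)) / ((d : ℝ) * ((d : ℝ) + 1)) := by
      intro k _
      simp only [hBdef]
      ring
    rw [Finset.sum_congr rfl hcongr, Finset.sum_sub_distrib, ← Finset.sum_div,
      Finset.sum_sub_distrib, ← Finset.mul_sum, hz1, hz2]
    have hV : (((d : ℝ) + 1) * α - γ) / d + (γ - (d : ℝ) * α) / ((d : ℝ) + 1)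
        = ((2 * (d : ℝ) + 1) * α - γ) / ((d : ℝ) * ((d : ℝ) + 1)) := by
      field_simp
      ring
    linarith [hzopt, hV ▸ hzopt]
  -- hence every term vanishes
  have hterm : ∀ k ∈ Finset.univ, z k * B k = 0 := by
    have hnn : ∀ k ∈ (Finset.univ : Finset (Fin N)), 0 ≤ z k * B k := fun k _ =>
      mul_nonneg (hz0 k) (hBnonneg k)
    have : ∑ k : Fin N, z k * B k = 0 :=
      le_antisymm hsum (Finset.sum_nonneg hnn)
    exact (Finset.sum_eq_zero_iff_of_nonneg hnn).mp this
  have hzero : ∀ k : Fin N, (k : ℕ) + 1 ≠ d → (k : ℕ) + 1 ≠ d + 1 → z k = 0 := by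
    intro k h1 h2
    have := hterm k (Finset.mem_univ k)
    have hB := hBpos k h1 h2
    rcases mul_eq_zero.mp this with h | h
    · exact h
    · exact absurd h (ne_of_gt hB)
  have haval : ((a : ℕ) : ℝ) + 1 = d := by
    have : (a : ℕ) = d - 1 := rfl
    rw [this]
    have : (d - 1 : ℕ) + 1 = d := by omega
    exact_mod_cast this
  have hbval : ((b : ℕ) : ℝ) + 1 = (d : ℝ) + 1 := by
    have : (b : ℕ) = d := rfl
    rw [this]
  have hoff : ∀ c ∈ (Finset.univ : Finset (Fin N)), c ≠ a ∧ c ≠ b → z c = 0 := by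
    intro c _ ⟨hca, hcb⟩
    apply hzero c
    · intro h
      exact hca (Fin.ext (by rw [hav]; omega))
    · intro h
      exact hcb (Fin.ext (by rw [hbv]; omega))
  have hs1 : z a + z b = α := by
    rw [← hz1]
    exact (Finset.sum_eq_add_of_mem a b (Finset.mem_univ a) (Finset.mem_univ b) hab hoff).symm
  have hs2 : (d : ℝ) * z a + ((d : ℝ) + 1) * z b = γ := by
    rw [← hz2]
    rw [Finset.sum_eq_add_of_mem a b (Finset.mem_univ a) (Finset.mem_univ b) hab
      (fun c hc hcab => by rw [hoff c hc hcab]; ring)]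
    rw [haval, hbval]
  have hza : z a = ((d : ℝ) + 1) * α - γ := by
    linear_combination ((d : ℝ) + 1) * hs1 - hs2
  have hzb : z b = γ - (d : ℝ) * α := by
    linear_combination hs2 - (d : ℝ) * hs1
  funext k
  rcases eq_or_ne ((k : ℕ) + 1) d with h | h
  · have hk : k = a := Fin.ext (by rw [hav]; omega)
    rw [if_pos h, hk]
    exact hza
  · rcases eq_or_ne ((k : ℕ) + 1) (d + 1) with h' | h'
    · have hk : k = b := Fin.ext (by rw [hbv]; omega)
      rw [if_neg h, if_pos h', hk]
      exact hzb
    · rw [if_neg h, if_neg h']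
      exact hzero k h h'

/-- Uniqueness of the optimal feasible point of the single-index KAT linear program. -/
theorem kat_lp_unique (N : ℕ) (hN : 1 ≤ N) (α γ : ℝ)
    (hα : 0 < α) (h1 : α ≤ γ) (h2 : γ ≤ (N : ℝ) * α)
    (x y : Fin N → ℝ)
    (hx0 : ∀ k, 0 ≤ x k) (hx1 : ∑ k : Fin N, x k = α)
    (hx2 : ∑ k : Fin N, (((k : ℕ) : ℝ) + 1) * x k = γ)
    (hy0 : ∀ k, 0 ≤ y k) (hy1 : ∑ k : Fin N, y k = α)
    (hy2 : ∑ k : Fin N, (((k : ℕ) : ℝ) + 1) * y k = γ)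
    (hxmin : ∀ z : Fin N → ℝ, (∀ k, 0 ≤ z k) → (∑ k : Fin N, z k = α) →
      (∑ k : Fin N, (((k : ℕ) : ℝ) + 1) * z k = γ) →
      ∑ k : Fin N, x k / (((k : ℕ) : ℝ) + 1) ≤ ∑ k : Fin N, z k / (((k : ℕ) : ℝ) + 1))
    (hymin : ∀ z : Fin N → ℝ, (∀ k, 0 ≤ z k) → (∑ k : Fin N, z k = α) →
      (∑ k : Fin N, (((k : ℕ) : ℝ) + 1) * z k = γ) →
      ∑ k : Fin N, y k / (((k : ℕ) : ℝ) + 1) ≤ ∑ k : Fin N, z k / (((k : ℕ) : ℝ) + 1)) :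
    x = y := by
  rcases eq_or_lt_of_le hN with h | hN2
  · -- N = 1
    subst h
    funext k
    have hk : k = 0 := Subsingleton.elim k 0
    subst hk
    have hx : x 0 = α := by simpa using hx1
    have hy : y 0 = α := by simpa using hy1
    rw [hx, hy]
  · -- N ≥ 2
    -- choose d with 1 ≤ d < N, d·α ≤ γ ≤ (d+1)·α
    have hmge : (1 : ℝ) ≤ γ / α := (le_div_iff₀ hα).mpr (by linarith)
    set d : ℕ := min (⌊γ / α⌋.toNat) (N - 1) with hddef
    have hfl1 : (1 : ℤ) ≤ ⌊γ / α⌋ := by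
      exact_mod_cast Int.le_floor.mpr (by exact_mod_cast hmge)
    have hd1 : 1 ≤ d := by
      apply le_min
      · omega
      · omega
    have hdN : d < N := by omega
    have hdl : (d : ℝ) * α ≤ γ := by
      have hdle : (d : ℝ) ≤ γ / α := by
        have : (d : ℤ) ≤ ⌊γ / α⌋ := by
          have h' : d ≤ ⌊γ / α⌋.toNat := min_le_left _ _
          omega
        calc (d : ℝ) ≤ (⌊γ / α⌋ : ℝ) := by exact_mod_cast this
          _ ≤ γ / α := Int.floor_le _
      calc (d : ℝ) * α ≤ (γ / α) * α := by nlinarith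
        _ = γ := by field_simp
    have hdu : γ ≤ ((d : ℝ) + 1) * α := by
      rcases le_or_gt (⌊γ / α⌋.toNat) (N - 1) with h | h
      · have hdeq : d = ⌊γ / α⌋.toNat := by omega
        have hlt : γ / α < (d : ℝ) + 1 := by
          have : γ / α < (⌊γ / α⌋ : ℝ) + 1 := Int.lt_floor_add_one _
          have he : ((⌊γ / α⌋.toNat : ℤ) : ℝ) = ((⌊γ / α⌋ : ℤ) : ℝ) := by
            congr 1
            omega
          rw [hdeq]
          push_cast at he ⊢
          linarith
        calc γ = (γ / α) * α := by field_simp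
          _ ≤ ((d : ℝ) + 1) * α := by nlinarith
      · have hdeq : d = N - 1 := by omega
        have : (d : ℝ) + 1 = (N : ℝ) := by
          rw [hdeq]
          have : ((N - 1 : ℕ) : ℝ) = (N : ℝ) - 1 := by
            have : (1 : ℕ) ≤ N := hN
            push_cast [this]
            ring
          rw [this]; ring
        rw [this]; exact h2
    -- the two-point candidate
    set a : Fin N := ⟨d - 1, by omega⟩ with ha
    set b : Fin N := ⟨d, hdN⟩ with hb
    have hav : (a : ℕ) = d - 1 := rfl
    have hbv : (b : ℕ) = d := rfl
    have hab : a ≠ b := by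
      intro h
      have := congrArg Fin.val h
      rw [hav, hbv] at this
      omega
    set p : ℝ := ((d : ℝ) + 1) * α - γ with hp
    set q : ℝ := γ - (d : ℝ) * α with hq
    set w : Fin N → ℝ := fun k => if k = a then p else if k = b then q else 0 with hw
    have haval : ((a : ℕ) : ℝ) + 1 = d := by
      have h' : (a : ℕ) = d - 1 := rfl
      rw [h']
      have : (d - 1 : ℕ) + 1 = d := by omega
      exact_mod_cast this
    have hbval : ((b : ℕ) : ℝ) + 1 = (d : ℝ) + 1 := by
      have h' : (b : ℕ) = d := rfl
      rw [h']
    have hw0 : ∀ k, 0 ≤ w k := by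
      intro k
      simp only [hw]
      split_ifs
      · linarith
      · linarith
      · exact le_refl 0
    have hw1 : ∑ k : Fin N, w k = α := by
      have := sum_two_aux a b hab (fun _ => (1 : ℝ)) p q
      simp only [one_mul] at this
      rw [hw, this]
      simp only [hp, hq]; ring
    have hw2 : ∑ k : Fin N, (((k : ℕ) : ℝ) + 1) * w k = γ := by
      rw [hw, sum_two_aux a b hab (fun k => ((k : ℕ) : ℝ) + 1) p q, haval, hbval]
      simp only [hp, hq]; ring
    have hd0 : (0 : ℝ) < d := by exact_mod_cast hd1
    have hwobj : ∑ k : Fin N, w k / (((k : ℕ) : ℝ) + 1)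
        = (((d : ℝ) + 1) * α - γ) / d + (γ - (d : ℝ) * α) / ((d : ℝ) + 1) := by
      have hc : ∀ k ∈ (Finset.univ : Finset (Fin N)),
          w k / (((k : ℕ) : ℝ) + 1) = (1 / (((k : ℕ) : ℝ) + 1)) * w k := by
        intro k _; ring
      rw [Finset.sum_congr rfl hc, hw,
        sum_two_aux a b hab (fun k => 1 / (((k : ℕ) : ℝ) + 1)) p q, haval, hbval]
      simp only [hp, hq]
      field_simp
    have hxopt := hxmin w hw0 hw1 hw2
    have hyopt := hymin w hw0 hw1 hw2
    rw [hwobj] at hxopt hyopt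
    have hxeq := kat_aux N α γ d hd1 hdN hdl hdu x hx0 hx1 hx2 hxopt
    have hyeq := kat_aux N α γ d hd1 hdN hdl hdu y hy0 hy1 hy2 hyopt
    rw [hxeq, hyeq]
end

section
/- Let N ≥ 2 and let α, γ be real numbers with α > 0 and α ≤ γ < N·α. Define f : ℝ → ℝ by f(x) = ((2·χ(t(x)) + 1)/(χ(t(x))·(χ(t(x)) + 1)))·(α − x) − (1/(χ(t(x))·(χ(t(x)) + 1)))·(γ − N·x) + x/N, where t(x) = (γ − N·x)/(α − x). Then f is convex on the interval [max(0, γ − (N−1)·α), (γ − α)/(N−1)]. -/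
noncomputable def Lfun (N : ℕ) (α γ : ℝ) (k : ℕ) (x : ℝ) : ℝ :=
  ((2 * (k : ℝ) + 1) / ((k : ℝ) * ((k : ℝ) + 1))) * (α - x)
    - (1 / ((k : ℝ) * ((k : ℝ) + 1))) * (γ - (N : ℝ) * x) + x / (N : ℝ)

lemma Lfun_adj (N : ℕ) (α γ x : ℝ) (k : ℕ) (hk : 1 ≤ k) :
    Lfun N α γ k x - Lfun N α γ (k + 1) x
      = (2 / ((k : ℝ) * ((k : ℝ) + 1) * ((k : ℝ) + 2)))
          * (((k : ℝ) + 1) * (α - x) - (γ - (N : ℝ) * x)) := by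
  have h0 : (k : ℝ) ≠ 0 := by
    have : (1:ℝ) ≤ (k:ℝ) := by exact_mod_cast hk
    linarith
  have h1 : (k : ℝ) + 1 ≠ 0 := by positivity
  have h2 : (k : ℝ) + 2 ≠ 0 := by positivity
  simp only [Lfun]
  push_cast
  field_simp
  ring

lemma convexOn_affine (A B : ℝ) (D : Set ℝ) (hD : Convex ℝ D) :
    ConvexOn ℝ D (fun x => A * x + B) := by
  refine ⟨hD, fun x _ y _ a b ha hb hab => le_of_eq ?_⟩
  simp only [smul_eq_mul]
  linear_combination (-B) * hab

lemma Lfun_convexOn (N : ℕ) (α γ : ℝ) (k : ℕ) (D : Set ℝ) (hD : Convex ℝ D) :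
    ConvexOn ℝ D (Lfun N α γ k) := by
  have h : Lfun N α γ k = fun x =>
      (-((2 * (k : ℝ) + 1) / ((k : ℝ) * ((k : ℝ) + 1)))
        + (N : ℝ) / ((k : ℝ) * ((k : ℝ) + 1)) + 1 / (N : ℝ)) * x
      + (((2 * (k : ℝ) + 1) / ((k : ℝ) * ((k : ℝ) + 1))) * α
        - (1 / ((k : ℝ) * ((k : ℝ) + 1))) * γ) := by
    funext x
    simp only [Lfun]
    ring
  rw [h]
  exact convexOn_affine _ _ D hD

lemma convexOn_sup' {ι : Type*} (s : Finset ι) (hs : s.Nonempty) (D : Set ℝ) (hD : Convex ℝ D)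
    (g : ι → ℝ → ℝ) (hg : ∀ i ∈ s, ConvexOn ℝ D (g i)) :
    ConvexOn ℝ D (fun x => s.sup' hs (fun i => g i x)) := by
  induction hs using Finset.Nonempty.cons_induction with
  | singleton a => simpa using hg a (by simp)
  | cons a s ha hs ih =>
    have h1 : ConvexOn ℝ D (g a) := hg a (by simp)
    have h2 : ConvexOn ℝ D (fun x => s.sup' hs (fun i => g i x)) :=
      ih (fun i hi => hg i (Finset.mem_cons_of_mem hi))
    have h3 := h1.sup h2
    have heq : (fun x => (Finset.cons a s ha).sup' (Finset.cons_nonempty ha) (fun i => g i x))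
        = (g a ⊔ fun x => s.sup' hs (fun i => g i x)) := by
      funext x
      rw [Finset.sup'_cons hs]; rfl
    rw [heq]
    exact h3

lemma ConvexOn.congr'' {D : Set ℝ} {f g : ℝ → ℝ} (hg : ConvexOn ℝ D g)
    (h : ∀ x ∈ D, f x = g x) : ConvexOn ℝ D f := by
  refine ⟨hg.1, fun x hx y hy a b ha hb hab => ?_⟩
  rw [h _ (hg.1 hx hy ha hb hab), h _ hx, h _ hy]
  exact hg.2 hx hy ha hb hab

/-- The function `f i` of the proof of Theorem 2 is convex on
the interval `[max(0, γ − (N−1)α), (γ − α)/(N−1)]`. -/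
theorem f_convex (N : ℕ) (hN : 2 ≤ N) (α γ : ℝ)
    (hα : 0 < α) (h1 : α ≤ γ) (h2 : γ < (N : ℝ) * α)
    (t f : ℝ → ℝ)
    (ht : ∀ x, t x = (γ - (N : ℝ) * x) / (α - x))
    (hf : ∀ x, f x = ((2 * chi (t x) + 1) / (chi (t x) * (chi (t x) + 1))) * (α - x)
        - (1 / (chi (t x) * (chi (t x) + 1))) * (γ - (N : ℝ) * x) + x / (N : ℝ)) :
    ConvexOn ℝ (Set.Icc (max 0 (γ - ((N : ℝ) - 1) * α)) ((γ - α) / ((N : ℝ) - 1))) f := by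
  have hN2 : (2:ℝ) ≤ (N:ℝ) := by exact_mod_cast hN
  have hNpos : (0:ℝ) < (N:ℝ) - 1 := by linarith
  set lo := max 0 (γ - ((N:ℝ) - 1) * α) with hlo
  set hi := (γ - α) / ((N:ℝ) - 1) with hhi
  have hDconv : Convex ℝ (Set.Icc lo hi) := convex_Icc _ _
  have hne : (Finset.Icc 1 (N - 1)).Nonempty := ⟨1, by rw [Finset.mem_Icc]; omega⟩
  refine ConvexOn.congr'' (convexOn_sup' _ hne _ hDconv (fun k => Lfun N α γ k)
    (fun k _ => Lfun_convexOn N α γ k _ hDconv)) ?_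
  rintro x ⟨hx1, hx2⟩
  -- basic estimates
  have hhiα : hi < α := by
    rw [hhi, div_lt_iff₀ hNpos]; nlinarith
  have hpos : 0 < α - x := by linarith [hx2]
  have hx2' : x * ((N:ℝ) - 1) ≤ γ - α := (le_div_iff₀ hNpos).mp hx2
  have hx1' : γ - ((N:ℝ) - 1) * α ≤ x := le_trans (le_max_right _ _) hx1
  have hge : α - x ≤ γ - (N:ℝ) * x := by linarith
  have hle : γ - (N:ℝ) * x ≤ ((N:ℝ) - 1) * (α - x) := by nlinarith
  have htx : t x = (γ - (N:ℝ) * x) / (α - x) := ht x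
  have hu1 : 1 ≤ t x := by rw [htx, le_div_iff₀ hpos]; linarith
  have huN : t x ≤ (N:ℝ) - 1 := by rw [htx, div_le_iff₀ hpos]; linarith
  -- find the piece index k
  obtain ⟨k, hk1, hkN, hchi, hklo, hkhi⟩ :
      ∃ k : ℕ, 1 ≤ k ∧ k ≤ N - 1 ∧ chi (t x) = (k:ℝ) ∧ (k:ℝ) ≤ t x ∧ t x ≤ (k:ℝ) + 1 := by
    by_cases hc : (∃ n : ℤ, t x = (n:ℝ)) ∧ 2 ≤ t x
    · obtain ⟨⟨n, hn⟩, h2u⟩ := hc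
      have hn2 : (2:ℤ) ≤ n := by
        have : (2:ℝ) ≤ (n:ℝ) := hn ▸ h2u
        exact_mod_cast this
      have hnN : n ≤ (N:ℤ) - 1 := by
        have h' : (n:ℝ) ≤ (N:ℝ) - 1 := hn ▸ huN
        have : ((n:ℤ):ℝ) ≤ (((N:ℤ) - 1 : ℤ):ℝ) := by push_cast; push_cast at h'; linarith
        exact_mod_cast this
      have hcast : (((n - 1).toNat : ℕ) : ℝ) = (n : ℝ) - 1 := by
        have h' : ((n - 1).toNat : ℤ) = n - 1 := Int.toNat_of_nonneg (by omega)
        exact_mod_cast congrArg (fun z : ℤ => (z : ℝ)) h'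
      refine ⟨(n - 1).toNat, by omega, by omega, ?_, ?_, ?_⟩
      · rw [chi, if_pos ⟨⟨n, hn⟩, h2u⟩, hn, hcast]
      · rw [hn, hcast]; linarith
      · rw [hn, hcast]; linarith
    · have hchi0 : chi (t x) = (⌊t x⌋ : ℝ) := by rw [chi, if_neg hc]
      have hfl1 : 1 ≤ ⌊t x⌋ := by
        rw [Int.le_floor]; exact_mod_cast hu1
      have hflN : ⌊t x⌋ ≤ (N:ℤ) - 1 := by
        have h' : (⌊t x⌋:ℝ) ≤ (N:ℝ) - 1 := le_trans (Int.floor_le _) huN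
        have : ((⌊t x⌋:ℤ):ℝ) ≤ (((N:ℤ) - 1 : ℤ):ℝ) := by push_cast; push_cast at h'; linarith
        exact_mod_cast this
      have hcast : ((⌊t x⌋.toNat : ℕ) : ℝ) = (⌊t x⌋ : ℝ) := by
        have h' : (⌊t x⌋.toNat : ℤ) = ⌊t x⌋ := Int.toNat_of_nonneg (by omega)
        exact_mod_cast congrArg (fun z : ℤ => (z : ℝ)) h'
      refine ⟨⌊t x⌋.toNat, by omega, by omega, ?_, ?_, ?_⟩
      · rw [hchi0, hcast]
      · rw [hcast]; exact Int.floor_le _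
      · rw [hcast]; exact le_of_lt (Int.lt_floor_add_one _)
  -- comparison facts
  have hkle : (k:ℝ) * (α - x) ≤ γ - (N:ℝ) * x := by
    rw [htx, le_div_iff₀ hpos] at hklo; linarith
  have hkge : γ - (N:ℝ) * x ≤ ((k:ℝ) + 1) * (α - x) := by
    rw [htx, div_le_iff₀ hpos] at hkhi; linarith
  -- adjacent step inequalities
  have stepUp : ∀ j : ℕ, k ≤ j → Lfun N α γ (j + 1) x ≤ Lfun N α γ j x := by
    intro j hj
    have h1j : 1 ≤ j := le_trans hk1 hj
    have hadj := Lfun_adj N α γ x j h1j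
    have hjR : (1:ℝ) ≤ (j:ℝ) := by exact_mod_cast h1j
    have hjk : (k:ℝ) ≤ (j:ℝ) := by exact_mod_cast hj
    have hfac : 0 ≤ ((j:ℝ) + 1) * (α - x) - (γ - (N:ℝ) * x) := by nlinarith
    have hcoef : 0 ≤ 2 / ((j:ℝ) * ((j:ℝ) + 1) * ((j:ℝ) + 2)) := by
      positivity
    linarith [mul_nonneg hcoef hfac]
  have stepDown : ∀ j : ℕ, 1 ≤ j → j + 1 ≤ k → Lfun N α γ j x ≤ Lfun N α γ (j + 1) x := by
    intro j h1j hjk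
    have hadj := Lfun_adj N α γ x j h1j
    have hjR : (1:ℝ) ≤ (j:ℝ) := by exact_mod_cast h1j
    have hjk' : (j:ℝ) + 1 ≤ (k:ℝ) := by exact_mod_cast hjk
    have hfac : ((j:ℝ) + 1) * (α - x) - (γ - (N:ℝ) * x) ≤ 0 := by nlinarith
    have hcoef : 0 ≤ 2 / ((j:ℝ) * ((j:ℝ) + 1) * ((j:ℝ) + 2)) := by
      positivity
    linarith [mul_nonpos_of_nonneg_of_nonpos hcoef hfac]
  -- k is the max
  have up : ∀ j : ℕ, k ≤ j → Lfun N α γ j x ≤ Lfun N α γ k x := by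
    intro j hj
    induction j, hj using Nat.le_induction with
    | base => exact le_refl _
    | succ m hm ih => exact le_trans (stepUp m hm) ih
  have down : ∀ j : ℕ, 1 ≤ j → j ≤ k → Lfun N α γ j x ≤ Lfun N α γ k x := by
    intro j h1j hjk
    have key : ∀ m : ℕ, j ≤ m → m ≤ k → Lfun N α γ j x ≤ Lfun N α γ m x := by
      intro m hjm
      induction m, hjm using Nat.le_induction with
      | base => intro _; exact le_refl _
      | succ m hm ih =>
        intro hmk
        exact le_trans (ih (by omega)) (stepDown m (by omega) hmk)
    exact key k hjk le_rfl
  -- conclude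
  have hmem : k ∈ Finset.Icc 1 (N - 1) := by rw [Finset.mem_Icc]; exact ⟨hk1, hkN⟩
  have hfx : f x = Lfun N α γ k x := by
    rw [hf x, hchi]; rfl
  rw [hfx]
  refine le_antisymm (Finset.le_sup' (fun j => Lfun N α γ j x) hmem) ?_
  apply Finset.sup'_le
  intro j hj
  rw [Finset.mem_Icc] at hj
  rcases le_total j k with h | h
  · exact down j hj.1 h
  · exact up j h
end

section
/- (Tightness of the Dawson–Sankoff LP relaxation) Let N ≥ 1 and let S_1, S_2 be real numbers. Then the infimum of Σ_{i=1}^N Σ_{k=1}^N a_i(k)/k over all real numbers a_i(k) ≥ 0 (i, k ∈ {1,…,N}) satisfying Σ_{i=1}^N Σ_{k=1}^N a_i(k) = S_1, Σ_{i=1}^N Σ_{k=1}^N k·a_i(k) = S_2, and Σ_{i=1}^N a_i(k) ≥ k·a_j(k) for all j, k ∈ {1,…,N}, is equal to the infimum of Σ_{k=1}^N a(k)/k over all real numbers a(k) ≥ 0 (k ∈ {1,…,N}) satisfying Σ_{k=1}^N a(k) = S_1 and Σ_{k=1}^N k·a(k) = S_2. -/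
/-- Tightness of the Dawson–Sankoff LP relaxation: the LP over the `a i k` with the
achievability constraints has the same infimum as the aggregated LP over the `a k`. -/
theorem ds_lp_relaxation_tight (N : ℕ) (hN : 1 ≤ N) (S1 S2 : ℝ) :
    sInf {v : ℝ | ∃ a : Fin N → ℕ → ℝ,
        (∀ i : Fin N, ∀ k ∈ Finset.Icc 1 N, 0 ≤ a i k) ∧
        (∑ i : Fin N, ∑ k ∈ Finset.Icc 1 N, a i k = S1) ∧
        (∑ i : Fin N, ∑ k ∈ Finset.Icc 1 N, (k : ℝ) * a i k = S2) ∧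
        (∀ j : Fin N, ∀ k ∈ Finset.Icc 1 N, ∑ i : Fin N, a i k ≥ (k : ℝ) * a j k) ∧
        v = ∑ i : Fin N, ∑ k ∈ Finset.Icc 1 N, a i k / (k : ℝ)} =
    sInf {v : ℝ | ∃ a : ℕ → ℝ,
        (∀ k ∈ Finset.Icc 1 N, 0 ≤ a k) ∧
        (∑ k ∈ Finset.Icc 1 N, a k = S1) ∧
        (∑ k ∈ Finset.Icc 1 N, (k : ℝ) * a k = S2) ∧
        v = ∑ k ∈ Finset.Icc 1 N, a k / (k : ℝ)} := by
  have hN0 : (N : ℝ) ≠ 0 := Nat.cast_ne_zero.mpr (by omega)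
  have key : ∀ c : ℝ, (∑ _i : Fin N, c) = (N : ℝ) * c := fun c => by
    simp [Finset.sum_const, nsmul_eq_mul]
  congr 1
  ext v
  constructor
  · rintro ⟨a, hpos, h1, h2, -, hv⟩
    refine ⟨fun k => ∑ i : Fin N, a i k, ?_, ?_, ?_, ?_⟩
    · exact fun k hk => Finset.sum_nonneg fun i _ => hpos i k hk
    · rw [Finset.sum_comm] at h1; exact h1
    · rw [Finset.sum_comm] at h2
      simpa [Finset.mul_sum] using h2
    · rw [Finset.sum_comm] at hv
      simpa [Finset.sum_div] using hv
  · rintro ⟨a, hpos, h1, h2, hv⟩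
    refine ⟨fun _ k => a k / N, ?_, ?_, ?_, ?_, ?_⟩
    · exact fun i k hk => div_nonneg (hpos k hk) (Nat.cast_nonneg N)
    · rw [Finset.sum_comm, ← h1]
      refine Finset.sum_congr rfl fun k _ => ?_
      rw [key]; field_simp
    · rw [Finset.sum_comm, ← h2]
      refine Finset.sum_congr rfl fun k _ => ?_
      rw [key]; field_simp
    · intro j k hk
      have hkN : (k : ℝ) ≤ N := by
        exact_mod_cast (Finset.mem_Icc.mp hk).2
      have hak := hpos k hk
      show (k : ℝ) * (a k / N) ≤ ∑ _i : Fin N, a k / N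
      rw [key]
      exact mul_le_mul_of_nonneg_right hkN (div_nonneg hak (Nat.cast_nonneg N))
    · rw [hv, Finset.sum_comm]
      refine Finset.sum_congr rfl fun k hk => ?_
      have hk0 : (k : ℝ) ≠ 0 := Nat.cast_ne_zero.mpr (by
        have := (Finset.mem_Icc.mp hk).1; omega)
      rw [key]; field_simp
end
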